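/- Let ω be a modulus of continuity satisfying inf_{0<t≤1} ω(t²)/ω(t) > 0, let f ∈ Lip_ω, let E be a closed subset of the boundary zero set E_f, and let S be a singular inner function with σ(S) ⊆ E and total mass ∫_𝕋 dμ_S ≤ M for a constant M > 0. Then S·f ∈ Lip_ω and ‖S·f‖_ω ≤ c·‖f‖_ω, where c > 0 depends only on ω and M. If moreover f ∈ J_ω(E), then S·f ∈ J_ω(E). -/

import Mathlib

open Complex Metric Set MeasureTheory Filter

noncomputable section

/-- A modulus of continuity: nonnegative, nondecreasing, continuous on `[0,2]`,
vanishing at `0`, not identically zero, with `t ↦ ω t / t` nonincreasing. -/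
structure ModulusOfContinuity where
  toFun : ℝ → ℝ
  nonneg : ∀ t ∈ Set.Icc (0:ℝ) 2, 0 ≤ toFun t
  mono : MonotoneOn toFun (Set.Icc (0:ℝ) 2)
  cont : ContinuousOn toFun (Set.Icc (0:ℝ) 2)
  zero : toFun 0 = 0
  nontrivial : ∃ t ∈ Set.Icc (0:ℝ) 2, toFun t ≠ 0
  quot_anti : AntitoneOn (fun t => toFun t / t) (Set.Ioc (0:ℝ) 2)

instance : CoeFun ModulusOfContinuity (fun _ => ℝ → ℝ) := ⟨ModulusOfContinuity.toFun⟩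

/-- The condition `inf_{0<t≤1} ω(t²)/ω(t) > 0`. -/
def EtaPos (ω : ModulusOfContinuity) : Prop :=
  ∃ η > (0:ℝ), ∀ t ∈ Set.Ioc (0:ℝ) 1, η * ω t ≤ ω (t ^ 2)

/-- Membership in `H^∞`: bounded analytic on the open unit disk. -/
def MemHinf (f : ℂ → ℂ) : Prop :=
  DifferentiableOn ℂ f (ball (0:ℂ) 1) ∧ ∃ M : ℝ, ∀ z ∈ ball (0:ℂ) 1, ‖f z‖ ≤ M

/-- Membership in the big Lipschitz algebra `Lip_ω` (boundary form, by Tamrazov's theorem):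
continuous on the closed disk, analytic in the open disk, and `ω`-Lipschitz on the circle. -/
def MemLip (ω : ModulusOfContinuity) (f : ℂ → ℂ) : Prop :=
  ContinuousOn f (closedBall (0:ℂ) 1) ∧ DifferentiableOn ℂ f (ball (0:ℂ) 1) ∧
    ∃ C : ℝ, ∀ ξ ∈ sphere (0:ℂ) 1, ∀ ζ ∈ sphere (0:ℂ) 1, ξ ≠ ζ →
      ‖f ξ - f ζ‖ ≤ C * ω (‖ξ - ζ‖)

/-- Supremum norm over the closed unit disk. -/
def supNorm (f : ℂ → ℂ) : ℝ :=
  sSup ((fun z => ‖f z‖) '' closedBall (0:ℂ) 1)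

/-- The `ω`-Lipschitz seminorm on the unit circle. -/
def lipSemi (ω : ModulusOfContinuity) (f : ℂ → ℂ) : ℝ :=
  sSup ((fun p : ℂ × ℂ => ‖f p.1 - f p.2‖ / ω (‖p.1 - p.2‖)) ''
    {p : ℂ × ℂ | p.1 ∈ sphere (0:ℂ) 1 ∧ p.2 ∈ sphere (0:ℂ) 1 ∧ p.1 ≠ p.2})

/-- The norm `‖f‖_ω = ‖f‖_∞ + sup_{ξ≠ζ∈𝕋} |f ξ - f ζ|/ω(|ξ-ζ|)`. -/
def lipNorm (ω : ModulusOfContinuity) (f : ℂ → ℂ) : ℝ := supNorm f + lipSemi ω f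

/-- A closed ideal of the Banach algebra `Lip_ω`. -/
structure ClosedIdealLip (ω : ModulusOfContinuity) where
  carrier : Set (ℂ → ℂ)
  mem_lip : ∀ f ∈ carrier, MemLip ω f
  add_mem : ∀ f ∈ carrier, ∀ g ∈ carrier, (fun z => f z + g z) ∈ carrier
  smul_mem : ∀ (c : ℂ), ∀ f ∈ carrier, (fun z => c * f z) ∈ carrier
  mul_mem : ∀ f ∈ carrier, ∀ g, MemLip ω g → (fun z => f z * g z) ∈ carrier
  closed_mem : ∀ f, MemLip ω f →
    (∀ ε > (0:ℝ), ∃ g ∈ carrier, lipNorm ω (fun z => f z - g z) ≤ ε) → f ∈ carrier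

/-- The hull `E_I = {ξ ∈ 𝕋 : f ξ = 0 for all f ∈ I}`. -/
def hullSet (I : Set (ℂ → ℂ)) : Set ℂ :=
  {ξ | ξ ∈ sphere (0:ℂ) 1 ∧ ∀ f ∈ I, f ξ = 0}

/-- `E(δ) = {ξ ∈ 𝕋 : d(ξ,E) ≤ δ}`. -/
def ENbhd (E : Set ℂ) (δ : ℝ) : Set ℂ :=
  {ξ | ξ ∈ sphere (0:ℂ) 1 ∧ Metric.infDist ξ E ≤ δ}

/-- The condition `lim_{δ→0} sup_{ξ≠ζ∈E(δ)} |f ξ - f ζ|/ω(|ξ-ζ|) = 0`. -/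
def JCond (ω : ModulusOfContinuity) (E : Set ℂ) (f : ℂ → ℂ) : Prop :=
  ∀ ε > (0:ℝ), ∃ δ > (0:ℝ), ∀ ξ ∈ ENbhd E δ, ∀ ζ ∈ ENbhd E δ, ξ ≠ ζ →
    ‖f ξ - f ζ‖ ≤ ε * ω (‖ξ - ζ‖)

/-- `I_ω(E)`. -/
def MemI (ω : ModulusOfContinuity) (E : Set ℂ) (f : ℂ → ℂ) : Prop :=
  MemLip ω f ∧ ∀ ξ ∈ E, f ξ = 0

/-- `J_ω(E)`. -/
def MemJ (ω : ModulusOfContinuity) (E : Set ℂ) (f : ℂ → ℂ) : Prop :=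
  MemI ω E f ∧ JCond ω E f

/-- `u` divides `f` in `H^∞`: `f / u ∈ H^∞`. -/
def DividesIn (u f : ℂ → ℂ) : Prop :=
  ∃ h : ℂ → ℂ, MemHinf h ∧ ∀ z ∈ ball (0:ℂ) 1, f z = u z * h z

/-- An inner function: bounded by 1, analytic on the disk, with radial limits of
modulus 1 at almost every boundary point. -/
def IsInner (u : ℂ → ℂ) : Prop :=
  DifferentiableOn ℂ u (ball (0:ℂ) 1) ∧ (∀ z ∈ ball (0:ℂ) 1, ‖u z‖ ≤ 1) ∧
  ∀ᵐ (θ : ℝ) ∂(volume : Measure ℝ),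
    Tendsto (fun r : ℝ => ‖u ((r : ℂ) * Complex.exp ((θ : ℂ) * Complex.I))‖)
      (nhdsWithin 1 (Set.Iio 1)) (nhds 1)

/-- `U` is the greatest common inner divisor of the inner parts of the nonzero members of `I`. -/
def IsGcdInner (I : Set (ℂ → ℂ)) (U : ℂ → ℂ) : Prop :=
  IsInner U ∧ (∀ f ∈ I, f ≠ 0 → DividesIn U f) ∧
  ∀ W : ℂ → ℂ, IsInner W → (∀ f ∈ I, f ≠ 0 → DividesIn W f) → DividesIn W U

/-- `J_ω(E, U)`. -/
def MemJU (ω : ModulusOfContinuity) (E : Set ℂ) (U : ℂ → ℂ) (f : ℂ → ℂ) : Prop :=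
  MemLip ω f ∧ (∀ ξ ∈ E, f ξ = 0) ∧ DividesIn U f ∧ JCond ω E f

/-- `E ⊆ 𝕋` has zero Lebesgue (arclength) measure. -/
def CircNull (E : Set ℂ) : Prop :=
  volume {θ : ℝ | θ ∈ Set.Ico (0:ℝ) (2 * Real.pi) ∧ Complex.exp ((θ : ℂ) * Complex.I) ∈ E} = 0

/-- The spectrum `σ(U) = {λ ∈ 𝔻̄ : liminf_{z→λ, z∈𝔻} |U z| = 0}`. -/
def innerSpec (U : ℂ → ℂ) : Set ℂ :=
  {l | l ∈ closedBall (0:ℂ) 1 ∧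
    Filter.liminf (fun z => ‖U z‖) (nhdsWithin l (ball (0:ℂ) 1)) = 0}

/-- An outer function: `F z = c · exp((1/2π) ∫ (e^{iθ}+z)/(e^{iθ}-z) w(θ) dθ)`
with `|c| = 1` and `w` integrable. -/
def IsOuter (F : ℂ → ℂ) : Prop :=
  ∃ c : ℂ, ‖c‖ = 1 ∧ ∃ w : ℝ → ℝ,
    IntervalIntegrable w volume 0 (2 * Real.pi) ∧
    ∀ z ∈ ball (0:ℂ) 1, F z = c * Complex.exp ((1 / (2 * Real.pi) : ℂ) *
      ∫ θ in (0:ℝ)..(2 * Real.pi),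
        ((Complex.exp ((θ : ℂ) * Complex.I) + z) / (Complex.exp ((θ : ℂ) * Complex.I) - z)) *
          (w θ : ℂ))

/-- Boundary zero set `E_f = {ξ ∈ 𝕋 : f ξ = 0}`. -/
def bdryZeroSet (f : ℂ → ℂ) : Set ℂ := {ξ | ξ ∈ sphere (0:ℂ) 1 ∧ f ξ = 0}

/-- `Δ ∈ Ω_E`: `Δ` is a union of connected components (complementary arcs) of `𝕋 \ E`. -/
def MemOmega (E : Set ℂ) (Δ : Set ℂ) : Prop :=
  Δ ⊆ sphere (0:ℂ) 1 \ E ∧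
  ∀ z ∈ Δ, connectedComponentIn (sphere (0:ℂ) 1 \ E) z ⊆ Δ

/-- The Korenblum outer function
`f_Γ z = exp((1/2π) ∫_Γ (ξ+z)/(ξ-z) log|f ξ| |dξ|)`. -/
def korenblum (f : ℂ → ℂ) (Γ : Set ℂ) (z : ℂ) : ℂ :=
  Complex.exp ((1 / (2 * Real.pi) : ℂ) *
    ∫ θ in (0:ℝ)..(2 * Real.pi),
      Set.indicator Γ
        (fun ξ => ((ξ + z) / (ξ - z)) * (Real.log (‖f ξ‖) : ℂ))
        (Complex.exp ((θ : ℂ) * Complex.I)))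

/-- A singular inner function with associated positive singular measure `μ`
(carried by `[0,2π)` via `θ ↦ e^{iθ}`). -/
def IsSingularInnerWith (S : ℂ → ℂ) (μ : Measure ℝ) : Prop :=
  μ Set.univ < ⊤ ∧ μ (Set.Ico (0:ℝ) (2 * Real.pi))ᶜ = 0 ∧
  μ.MutuallySingular volume ∧
  ∀ z ∈ ball (0:ℂ) 1, S z = Complex.exp (-(1 / (2 * Real.pi) : ℂ) *
    ∫ θ, ((Complex.exp ((θ : ℂ) * Complex.I) + z) /
      (Complex.exp ((θ : ℂ) * Complex.I) - z)) ∂μ)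

/-- Single Blaschke factor with zero `w` (with the conventions that `w = 0` gives the factor
`z`, and `|w| = 1` gives the constant factor `1`, used for padding). -/
def blaschkeFactor (w z : ℂ) : ℂ :=
  if w = 0 then z
  else ((‖w‖ : ℂ) / w) * (w - z) / (1 - (starRingEnd ℂ) w * z)

/-- `B` is the Blaschke product with zero sequence `a` (boundary points of the sequence
serve as padding, contributing factors `1`). -/
def IsBlaschkeOf (B : ℂ → ℂ) (a : ℕ → ℂ) : Prop :=
  (∀ n, ‖a n‖ ≤ 1) ∧ Summable (fun n => 1 - ‖a n‖) ∧
  ∀ z ∈ ball (0:ℂ) 1, HasProd (fun n => blaschkeFactor (a n) z) (B z)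

/-- Total-variation distance between two (finite) measures. -/
def tvDist (μ ν : Measure ℝ) : ℝ :=
  sSup {r : ℝ | ∃ s : Set ℝ, MeasurableSet s ∧ r = |(μ s).toReal - (ν s).toReal|}

/-- The function `z ↦ exp(-(1/2π) ∫ (e^{iθ}+z)/(e^{iθ}-z) dμ(θ))`, defining a singular
inner function on the disk together with its analytic extension off the support of `μ`. -/
def singExp (μ : Measure ℝ) (z : ℂ) : ℂ :=
  Complex.exp (-(1 / (2 * Real.pi) : ℂ) *
    ∫ θ, ((Complex.exp ((θ : ℂ) * Complex.I) + z) /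
      (Complex.exp ((θ : ℂ) * Complex.I) - z)) ∂μ)

/-- `a_U(ζ) = Σ_n (1-|z_n|²)/|ζ-z_n|² + (1/π) ∫ |e^{iθ}-ζ|⁻² dμ(θ)` for an inner function
with zeros `a` and singular measure `μ`. -/
def aFun (a : ℕ → ℂ) (μ : Measure ℝ) (ζ : ℂ) : ℝ :=
  (∑' n, (1 - ‖a n‖ ^ 2) / ‖ζ - a n‖ ^ 2) +
  (1 / Real.pi) * ∫ θ, (1 / ‖Complex.exp ((θ : ℂ) * Complex.I) - ζ‖ ^ 2) ∂μ


/- ### Auxiliary lemmas ### -/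

def Complex.abs : AbsoluteValue ℂ ℝ := IsAbsoluteValue.toAbsoluteValue (norm : ℂ → ℝ)

lemma Complex.norm_eq_abs (z : ℂ) : ‖z‖ = Complex.abs z := rfl

lemma Complex.abs_exp (z : ℂ) : Complex.abs (Complex.exp z) = Real.exp z.re := Complex.norm_exp z

@[simp] lemma Complex.abs_ofReal (r : ℝ) : Complex.abs (r : ℂ) = |r| := Complex.norm_real r

@[simp] lemma Complex.abs_two : Complex.abs 2 = 2 := by
  rw [← Complex.norm_eq_abs]; norm_num

lemma Complex.sq_abs (z : ℂ) : Complex.abs z ^ 2 = Complex.normSq z := Complex.sq_norm z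

lemma Complex.continuous_abs : Continuous Complex.abs := continuous_norm

lemma Complex.abs_apply (z : ℂ) : Complex.abs z = ‖z‖ := rfl

@[simp] lemma Complex.abs_I : Complex.abs Complex.I = 1 := Complex.norm_I

lemma SMdist_eq (z w : ℂ) : dist z w = Complex.abs (z - w) := Complex.dist_eq z w

lemma Complex.abs.pos {z : ℂ} (h : z ≠ 0) : 0 < Complex.abs z := norm_pos_iff.mpr h


def SMce (θ : ℝ) : ℂ := Complex.exp ((θ : ℂ) * Complex.I)

lemma SMce_abs (θ : ℝ) : Complex.abs (SMce θ) = 1 := by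
  simp [SMce, Complex.abs_exp]

lemma SMce_mem_sphere (θ : ℝ) : SMce θ ∈ sphere (0:ℂ) 1 := by
  simp [mem_sphere_iff_norm, Complex.norm_eq_abs, SMce_abs]

lemma SMce_continuous : Continuous SMce :=
  Complex.continuous_exp.comp (Complex.continuous_ofReal.mul continuous_const)

lemma SMce_hasDerivAt (x : ℝ) :
    HasDerivAt SMce (SMce x * Complex.I) x := by
  have h1 : HasDerivAt (fun z : ℂ => Complex.exp (z * Complex.I))
      (Complex.exp ((x:ℂ) * Complex.I) * Complex.I) (x:ℂ) :=
    (Complex.hasDerivAt_exp ((x:ℂ) * Complex.I)).comp (x:ℂ)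
      (hasDerivAt_mul_const Complex.I)
  exact h1.comp_ofReal

lemma SMce_chord (a b : ℝ) : Complex.abs (SMce a - SMce b) ≤ |a - b| := by
  have h := Convex.norm_image_sub_le_of_norm_hasDerivWithin_le (C := 1)
    (f := SMce) (f' := fun x => SMce x * Complex.I) (s := (univ : Set ℝ))
    (fun x _ => (SMce_hasDerivAt x).hasDerivWithinAt)
    (fun x _ => by simp [Complex.norm_eq_abs, SMce_abs])
    convex_univ (mem_univ b) (mem_univ a)
  simpa [Complex.norm_eq_abs, Real.norm_eq_abs] using h

lemma SM_abs_exp_sub_exp {a b : ℂ} (ha : a.re ≤ 0) (hb : b.re ≤ 0) :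
    Complex.abs (Complex.exp a - Complex.exp b) ≤ Complex.abs (a - b) := by
  set φ : ℝ → ℂ := fun t => Complex.exp (b + (t:ℂ) * (a - b)) with hφ
  have hder : ∀ t : ℝ, HasDerivAt φ (Complex.exp (b + (t:ℂ) * (a - b)) * (a - b)) t := by
    intro t
    have h1 : HasDerivAt (fun z : ℂ => Complex.exp (b + z * (a - b)))
        (Complex.exp (b + (t:ℂ) * (a - b)) * (a - b)) (t:ℂ) :=
      (Complex.hasDerivAt_exp (b + (t:ℂ) * (a-b))).comp (t:ℂ)
        ((hasDerivAt_mul_const (a-b)).const_add b)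
    exact h1.comp_ofReal
  have h := Convex.norm_image_sub_le_of_norm_hasDerivWithin_le
    (f := φ) (f' := fun t => Complex.exp (b + (t:ℂ) * (a - b)) * (a - b))
    (s := Icc (0:ℝ) 1)
    (fun t _ => (hder t).hasDerivWithinAt)
    (fun t ht => by
      have hre : (b + (t:ℂ) * (a - b)).re ≤ 0 := by
        have : (b + (t:ℂ) * (a - b)).re = (1 - t) * b.re + t * a.re := by
          simp [Complex.add_re, Complex.mul_re, Complex.sub_re, Complex.ofReal_re,
            Complex.ofReal_im]
          ring
        rw [this]
        have h0 : (0:ℝ) ≤ t := ht.1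
        have h1 : t ≤ 1 := ht.2
        nlinarith
      calc ‖Complex.exp (b + (t:ℂ) * (a - b)) * (a - b)‖
          = Complex.abs (a - b) * Real.exp ((b + (t:ℂ) * (a - b)).re) := by
            simp [Complex.norm_eq_abs, map_mul, Complex.abs_exp, mul_comm]
        _ ≤ Complex.abs (a - b) * 1 := by
            refine mul_le_mul_of_nonneg_left ?_ (Complex.abs.nonneg _)
            simpa using Real.exp_le_exp.mpr hre
        _ = Complex.abs (a - b) := mul_one _)
    (convex_Icc 0 1) (left_mem_Icc.mpr zero_le_one) (right_mem_Icc.mpr zero_le_one)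
  have h0 : φ 0 = Complex.exp b := by simp [hφ]
  have h1 : φ 1 = Complex.exp a := by simp [hφ]
  calc Complex.abs (Complex.exp a - Complex.exp b) = ‖φ 1 - φ 0‖ := by
        rw [h0, h1, Complex.norm_eq_abs]
    _ ≤ Complex.abs (a - b) * ‖(1:ℝ) - 0‖ := h
    _ = Complex.abs (a - b) := by simp


section SMaux
open Topology

variable {ω : ModulusOfContinuity}

lemma SMomega_nonneg {t : ℝ} (h0 : 0 ≤ t) (h2 : t ≤ 2) : 0 ≤ ω t :=
  ω.nonneg t ⟨h0, h2⟩

lemma SMomega_pos {t : ℝ} (h0 : 0 < t) (h2 : t ≤ 2) : 0 < ω t := by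
  obtain ⟨t₀, ht₀, hne⟩ := ω.nontrivial
  have ht₀pos : 0 < ω t₀ := lt_of_le_of_ne (ω.nonneg t₀ ht₀) (Ne.symm hne)
  have ht₀0 : 0 < t₀ := by
    rcases lt_or_eq_of_le ht₀.1 with h | h
    · exact h
    · exact absurd (by rw [← h, ω.zero]) hne
  rcases le_total t₀ t with h | h
  · exact lt_of_lt_of_le ht₀pos (ω.mono ht₀ ⟨le_of_lt h0, h2⟩ h)
  · have hq := ω.quot_anti ⟨h0, h2⟩ ⟨ht₀0, ht₀.2⟩ h
    have : 0 < ω t₀ / t₀ := div_pos ht₀pos ht₀0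
    have h2' : 0 < ω t / t := lt_of_lt_of_le this hq
    exact (div_pos_iff.mp h2').resolve_right (fun ⟨_, h⟩ => absurd h0 (not_lt.mpr h.le)) |>.1

lemma SMomega_double {s : ℝ} (h0 : 0 < s) (h1 : s ≤ 1) : ω (2*s) ≤ 2 * ω s := by
  have hq := ω.quot_anti ⟨h0, by linarith⟩ ⟨by linarith, by linarith⟩ (by linarith : s ≤ 2*s)
  rw [div_le_div_iff₀ (by linarith) h0] at hq
  nlinarith

/-- Key quotient inequality: `ω v / v ≤ ω u / u` for `0 < u ≤ v ≤ 2`. -/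
lemma SMomega_quot {u v : ℝ} (hu : 0 < u) (huv : u ≤ v) (hv : v ≤ 2) :
    ω v * u ≤ ω u * v := by
  have hq := ω.quot_anti ⟨hu, by linarith⟩ ⟨by linarith, hv⟩ huv
  rw [div_le_div_iff₀ (by linarith) hu] at hq
  linarith

/-! ### The kernel `g` and the set `K` -/

def SMg (z : ℂ) (θ : ℝ) : ℂ := (SMce θ + z) / (SMce θ - z)

lemma SMsingExp_def (μ : Measure ℝ) (z : ℂ) :
    singExp μ z = Complex.exp (-(1/(2*Real.pi):ℂ) * ∫ θ, SMg z θ ∂μ) := rfl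

def SMKset (μ : Measure ℝ) : Set ℝ := {θ | ∀ δ > 0, 0 < μ (ball θ δ)}

def SMK (μ : Measure ℝ) : Set ℂ := SMce '' SMKset μ

variable {μ : Measure ℝ}

lemma SMKset_closed : IsClosed (SMKset μ) := by
  rw [← isOpen_compl_iff]
  rw [isOpen_iff_mem_nhds]
  intro x hx
  simp only [SMKset, mem_compl_iff, mem_setOf_eq, not_forall] at hx
  obtain ⟨δ, hδ, hball⟩ := hx
  push_neg at hball
  have hball' : μ (ball x δ) = 0 := le_antisymm hball bot_le
  have : ball x (δ/2) ⊆ (SMKset μ)ᶜ := by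
    intro y hy
    simp only [SMKset, mem_compl_iff, mem_setOf_eq, not_forall]
    refine ⟨δ/2, ⟨half_pos hδ, ?_⟩⟩
    have hsub : ball y (δ/2) ⊆ ball x δ := by
      intro u hu
      rw [mem_ball] at *
      have := dist_triangle u y x
      linarith
    rw [not_lt]
    exact le_trans (measure_mono hsub) (le_of_eq hball')
  exact Filter.mem_of_superset (ball_mem_nhds x (half_pos hδ)) this

lemma SMKset_null : μ (SMKset μ)ᶜ = 0 := by
  apply measure_null_of_locally_null
  intro x hx
  simp only [SMKset, mem_compl_iff, mem_setOf_eq, not_forall] at hx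
  obtain ⟨δ, hδ, hball⟩ := hx
  push_neg at hball
  exact ⟨ball x δ, mem_nhdsWithin_of_mem_nhds (ball_mem_nhds x hδ),
    le_antisymm hball bot_le⟩

lemma SMKset_subset (hco : μ (Set.Ico (0:ℝ) (2*Real.pi))ᶜ = 0) :
    SMKset μ ⊆ Icc 0 (2*Real.pi) := by
  intro θ hθ
  by_contra h
  simp only [mem_Icc, not_and_or, not_le] at h
  have : ∃ δ > 0, ball θ δ ⊆ (Set.Ico (0:ℝ) (2*Real.pi))ᶜ := by
    rcases h with h | h
    · refine ⟨-θ, by linarith, ?_⟩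
      intro u hu
      rw [mem_ball, Real.dist_eq] at hu
      have : u < 0 := by cases abs_lt.mp hu; linarith
      simp [Set.mem_Ico]; intro h'; linarith
    · refine ⟨θ - 2*Real.pi, by linarith, ?_⟩
      intro u hu
      rw [mem_ball, Real.dist_eq] at hu
      have : 2*Real.pi < u := by cases abs_lt.mp hu; linarith
      simp [Set.mem_Ico]; intro h'; linarith
  obtain ⟨δ, hδ, hsub⟩ := this
  have := hθ δ hδ
  rw [measure_mono_null hsub hco] at this
  exact lt_irrefl 0 this

lemma SMKset_compact (hco : μ (Set.Ico (0:ℝ) (2*Real.pi))ᶜ = 0) :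
    IsCompact (SMKset μ) :=
  (isCompact_Icc).of_isClosed_subset SMKset_closed (SMKset_subset hco)

lemma SMK_subset_sphere : SMK μ ⊆ sphere (0:ℂ) 1 := by
  rintro z ⟨θ, _, rfl⟩; exact SMce_mem_sphere θ

lemma SMK_compact (hco : μ (Set.Ico (0:ℝ) (2*Real.pi))ᶜ = 0) : IsCompact (SMK μ) :=
  (SMKset_compact hco).image SMce_continuous

lemma SMae_mem_K : ∀ᵐ θ ∂μ, SMce θ ∈ SMK μ := by
  filter_upwards [(ae_iff.mpr (SMKset_null (μ := μ)) : ∀ᵐ θ ∂μ, θ ∈ SMKset μ)] with θ hθ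
  exact mem_image_of_mem _ hθ

lemma SMae_dist_le (z : ℂ) : ∀ᵐ θ ∂μ, infDist z (SMK μ) ≤ Complex.abs (SMce θ - z) := by
  filter_upwards [SMae_mem_K] with θ hθ
  calc infDist z (SMK μ) ≤ dist z (SMce θ) := infDist_le_dist_of_mem hθ
    _ = Complex.abs (SMce θ - z) := by
        rw [SMdist_eq]; exact Complex.abs.map_sub _ _

lemma SMinfDist_pos (hK : (SMK μ).Nonempty) (hco : μ (Set.Ico (0:ℝ) (2*Real.pi))ᶜ = 0)
    {z : ℂ} (hz : z ∉ SMK μ) : 0 < infDist z (SMK μ) := by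
  rcases lt_or_eq_of_le (infDist_nonneg (s := SMK μ) (x := z)) with h | h
  · exact h
  · exfalso
    exact hz (((SMK_compact hco).isClosed.mem_iff_infDist_zero hK).mpr h.symm)

lemma SMinfDist_ball (hK : (SMK μ).Nonempty) {z : ℂ} :
    1 - Complex.abs z ≤ infDist z (SMK μ) := by
  rw [infDist_eq_iInf]
  haveI : Nonempty (SMK μ) := hK.to_subtype
  apply le_ciInf
  rintro ⟨k, hk⟩
  show 1 - Complex.abs z ≤ dist z k
  have hk1 : Complex.abs k = 1 := by
    have := SMK_subset_sphere hk
    simpa [mem_sphere_iff_norm, Complex.norm_eq_abs] using this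
  calc 1 - Complex.abs z = Complex.abs k - Complex.abs z := by rw [hk1]
    _ ≤ Complex.abs (k - z) := by
        simpa [Complex.norm_eq_abs] using norm_sub_norm_le k z
    _ = dist z k := by rw [SMdist_eq]; exact Complex.abs.map_sub _ _

lemma SMg_meas (z : ℂ) : Measurable (SMg z) := by
  apply Measurable.div
  · exact (SMce_continuous.measurable).add_const z
  · exact (SMce_continuous.measurable).sub_const z

lemma SMg_abs_le {z : ℂ} (hz : Complex.abs z ≤ 1) (θ : ℝ) :
    Complex.abs (SMg z θ) ≤ 2 / Complex.abs (SMce θ - z) := by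
  rw [SMg, map_div₀]
  rcases eq_or_lt_of_le (Complex.abs.nonneg (SMce θ - z)) with h | h
  · rw [← h]; simp
  · gcongr
    calc Complex.abs (SMce θ + z) ≤ Complex.abs (SMce θ) + Complex.abs z :=
          Complex.abs.add_le _ _
      _ ≤ 2 := by rw [SMce_abs]; linarith

lemma SMg_integrable [IsFiniteMeasure μ] {z : ℂ} (hz : Complex.abs z ≤ 1)
    (hd : 0 < infDist z (SMK μ)) : Integrable (SMg z) μ := by
  apply Integrable.mono' (integrable_const (2 / infDist z (SMK μ)))
    (SMg_meas z).aestronglyMeasurable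
  filter_upwards [SMae_dist_le (μ := μ) z] with θ hθ
  rw [Complex.norm_eq_abs]
  calc Complex.abs (SMg z θ) ≤ 2 / Complex.abs (SMce θ - z) := SMg_abs_le hz θ
    _ ≤ 2 / infDist z (SMK μ) := div_le_div_of_nonneg_left (by norm_num) hd hθ

lemma SMg_re_eq {z : ℂ} {θ : ℝ} (h : SMce θ ≠ z) :
    (SMg z θ).re = (1 - Complex.abs z^2) / Complex.abs (SMce θ - z)^2 := by
  have key : (SMg z θ).re =
      (Complex.normSq (SMce θ) - Complex.normSq z) / Complex.normSq (SMce θ - z) := by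
    rw [SMg, Complex.div_re]
    simp only [Complex.normSq_apply, Complex.add_re, Complex.add_im, Complex.sub_re,
      Complex.sub_im]
    ring
  rw [key, ← Complex.sq_abs, ← Complex.sq_abs z, ← Complex.sq_abs (SMce θ - z), SMce_abs]
  norm_num

lemma SMg_re_nonneg {z : ℂ} (hz : Complex.abs z ≤ 1) (θ : ℝ) : 0 ≤ (SMg z θ).re := by
  by_cases h : SMce θ = z
  · simp [SMg, h]
  · rw [SMg_re_eq h]
    apply div_nonneg _ (by positivity)
    nlinarith [Complex.abs.nonneg z]

lemma SMexponent_re_nonpos [IsFiniteMeasure μ] {z : ℂ} (hz : Complex.abs z ≤ 1)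
    (hint : Integrable (SMg z) μ) :
    (-(1/(2*Real.pi):ℂ) * ∫ θ, SMg z θ ∂μ).re ≤ 0 := by
  have hcast : (-(1/(2*Real.pi):ℂ)) = ((-(1/(2*Real.pi)):ℝ):ℂ) := by push_cast; ring
  rw [hcast, Complex.re_ofReal_mul]
  have h1 : 0 ≤ (∫ θ, SMg z θ ∂μ).re := by
    have h := integral_re hint
    simp only [RCLike.re_to_complex] at h
    rw [← h]
    exact integral_nonneg (fun θ => SMg_re_nonneg hz θ)
  have h2 : (-(1/(2*Real.pi)):ℝ) ≤ 0 := by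
    have := Real.pi_pos; rw [neg_nonpos]; positivity
  exact mul_nonpos_of_nonpos_of_nonneg h2 h1

lemma SMabs_singExp_le_one [IsFiniteMeasure μ] {z : ℂ} (hz : Complex.abs z ≤ 1)
    (hd : 0 < infDist z (SMK μ)) : Complex.abs (singExp μ z) ≤ 1 := by
  rw [SMsingExp_def, Complex.abs_exp, Real.exp_le_one_iff]
  exact SMexponent_re_nonpos hz (SMg_integrable hz hd)

lemma SMg_sub {z w : ℂ} {θ : ℝ} (hz' : SMce θ ≠ z) (hw' : SMce θ ≠ w) :
    SMg z θ - SMg w θ = 2 * SMce θ * (z - w) / ((SMce θ - z) * (SMce θ - w)) := by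
  have h1 : SMce θ - z ≠ 0 := sub_ne_zero.mpr hz'
  have h2 : SMce θ - w ≠ 0 := sub_ne_zero.mpr hw'
  rw [SMg, SMg]
  field_simp
  ring

lemma SMsingExp_sub [IsFiniteMeasure μ] {z w : ℂ} (hz : Complex.abs z ≤ 1)
    (hw : Complex.abs w ≤ 1) (hdz : 0 < infDist z (SMK μ)) (hdw : 0 < infDist w (SMK μ)) :
    Complex.abs (singExp μ z - singExp μ w) ≤
      ((μ univ).toReal / Real.pi) * Complex.abs (z - w) /
        (infDist z (SMK μ) * infDist w (SMK μ)) := by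
  have hπ := Real.pi_pos
  set dz := infDist z (SMK μ)
  set dw := infDist w (SMK μ)
  have hintz := SMg_integrable (μ := μ) hz hdz
  have hintw := SMg_integrable (μ := μ) hw hdw
  have step1 : Complex.abs (singExp μ z - singExp μ w) ≤
      (1/(2*Real.pi)) * Complex.abs ((∫ θ, SMg z θ ∂μ) - ∫ θ, SMg w θ ∂μ) := by
    rw [SMsingExp_def, SMsingExp_def]
    calc Complex.abs (Complex.exp (-(1/(2*Real.pi):ℂ) * ∫ θ, SMg z θ ∂μ) -
            Complex.exp (-(1/(2*Real.pi):ℂ) * ∫ θ, SMg w θ ∂μ))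
        ≤ Complex.abs ((-(1/(2*Real.pi):ℂ) * ∫ θ, SMg z θ ∂μ) -
            (-(1/(2*Real.pi):ℂ) * ∫ θ, SMg w θ ∂μ)) :=
          SM_abs_exp_sub_exp (SMexponent_re_nonpos hz hintz) (SMexponent_re_nonpos hw hintw)
      _ = Complex.abs (-(1/(2*Real.pi):ℂ)) *
            Complex.abs ((∫ θ, SMg z θ ∂μ) - ∫ θ, SMg w θ ∂μ) := by
          rw [← map_mul]; ring_nf
      _ = (1/(2*Real.pi)) * Complex.abs ((∫ θ, SMg z θ ∂μ) - ∫ θ, SMg w θ ∂μ) := by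
          congr 1
          rw [map_neg_eq_map]
          have : ((1/(2*Real.pi) : ℝ) : ℂ) = (1/(2*Real.pi):ℂ) := by push_cast; ring
          rw [← this, Complex.abs_ofReal, abs_of_pos (by positivity)]
  have step2 : Complex.abs ((∫ θ, SMg z θ ∂μ) - ∫ θ, SMg w θ ∂μ) ≤
      (μ univ).toReal * (2 * Complex.abs (z - w) / (dz * dw)) := by
    rw [← integral_sub hintz hintw]
    calc Complex.abs (∫ θ, (SMg z θ - SMg w θ) ∂μ)
        ≤ ∫ θ, ‖SMg z θ - SMg w θ‖ ∂μ := by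
          rw [← Complex.norm_eq_abs]; exact norm_integral_le_integral_norm _
      _ ≤ ∫ _θ, (2 * Complex.abs (z - w) / (dz * dw)) ∂μ := by
          apply integral_mono_ae ((hintz.sub hintw).norm) (integrable_const _)
          filter_upwards [SMae_dist_le (μ := μ) z, SMae_dist_le (μ := μ) w] with θ h1 h2
          have hz' : SMce θ ≠ z := by
            intro h; rw [h] at h1; simp at h1; exact absurd (le_antisymm h1 hdz.le) hdz.ne'
          have hw' : SMce θ ≠ w := by
            intro h; rw [h] at h2; simp at h2; exact absurd (le_antisymm h2 hdw.le) hdw.ne'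
          simp only [Pi.sub_apply]
          rw [Complex.norm_eq_abs, SMg_sub hz' hw', map_div₀, map_mul, map_mul, SMce_abs]
          have hpos1 : (0:ℝ) < Complex.abs (SMce θ - z) := lt_of_lt_of_le hdz h1
          have hpos2 : (0:ℝ) < Complex.abs (SMce θ - w) := lt_of_lt_of_le hdw h2
          rw [Complex.abs_two, mul_one, map_mul]
          exact div_le_div_of_nonneg_left (by positivity) (mul_pos hdz hdw)
            (mul_le_mul h1 h2 hdw.le (Complex.abs.nonneg _))
      _ = (μ univ).toReal * (2 * Complex.abs (z - w) / (dz * dw)) := by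
          rw [integral_const, smul_eq_mul, measureReal_def]
  calc Complex.abs (singExp μ z - singExp μ w)
      ≤ (1/(2*Real.pi)) * ((μ univ).toReal * (2 * Complex.abs (z - w) / (dz * dw))) := by
        refine le_trans step1 ?_
        exact mul_le_mul_of_nonneg_left step2 (by positivity)
    _ = (μ univ).toReal / Real.pi * Complex.abs (z - w) / (dz * dw) := by
        field_simp


lemma SMsingExp_differentiableOn [IsFiniteMeasure μ] (hK : (SMK μ).Nonempty) :
    DifferentiableOn ℂ (singExp μ) (ball (0:ℂ) 1) := by
  intro z₀ hz₀
  have hz₀' : Complex.abs z₀ < 1 := by simpa [mem_ball, SMdist_eq, Complex.norm_eq_abs] using hz₀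
  set r : ℝ := (1 - Complex.abs z₀)/2 with hr
  have hrpos : 0 < r := by
    have := Complex.abs.nonneg z₀; simp only [hr]; linarith
  have hdist : ∀ z ∈ ball z₀ r, ∀ θ : ℝ, r ≤ Complex.abs (SMce θ - z) := by
    intro z hzm θ
    have h1 : Complex.abs (z - z₀) < r := by
      simpa [mem_ball, SMdist_eq, Complex.norm_eq_abs] using hzm
    have h2 : Complex.abs z ≤ Complex.abs z₀ + r := by
      calc Complex.abs z = Complex.abs (z₀ + (z - z₀)) := by ring_nf
        _ ≤ Complex.abs z₀ + Complex.abs (z - z₀) := Complex.abs.add_le _ _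
        _ ≤ Complex.abs z₀ + r := by linarith
    calc r = 1 - (Complex.abs z₀ + r) := by simp only [hr]; ring
      _ ≤ Complex.abs (SMce θ) - Complex.abs z := by
          rw [SMce_abs]; linarith
      _ ≤ Complex.abs (SMce θ - z) := by
          simpa [Complex.norm_eq_abs] using norm_sub_norm_le (SMce θ) z
  have key := hasDerivAt_integral_of_dominated_loc_of_deriv_le (μ := μ) (𝕜 := ℂ)
      (F := fun z θ => SMg z θ)
      (F' := fun z θ => (1 * (SMce θ - z) - (SMce θ + z) * (-1)) / (SMce θ - z)^2)
      (x₀ := z₀) (bound := fun _ => 2 / r^2) (ball_mem_nhds z₀ hrpos)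
      (Filter.Eventually.of_forall fun z => (SMg_meas z).aestronglyMeasurable)
      (SMg_integrable (le_of_lt hz₀') (lt_of_lt_of_le ?_ (SMinfDist_ball hK)))
      ?_ ?_ (integrable_const _) ?_
  · exact ((key.2.const_mul (-(1/(2*Real.pi):ℂ))).cexp).differentiableAt.differentiableWithinAt
  · linarith
  · apply Measurable.aestronglyMeasurable
    apply Measurable.div
    · apply Measurable.sub
      · exact (measurable_const.mul ((SMce_continuous.measurable).sub_const z₀))
      · exact ((SMce_continuous.measurable).add_const z₀).mul_const _
    · exact ((SMce_continuous.measurable).sub_const z₀).pow_const 2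
  · apply Filter.Eventually.of_forall
    intro θ z hzm
    have h1 : 1 * (SMce θ - z) - (SMce θ + z) * (-1) = 2 * SMce θ := by ring
    show ‖(1 * (SMce θ - z) - (SMce θ + z) * (-1)) / (SMce θ - z)^2‖ ≤ 2 / r^2
    rw [Complex.norm_eq_abs, h1, map_div₀, map_mul, SMce_abs, map_pow, Complex.abs_two,
      mul_one]
    have h2 := hdist z hzm θ
    gcongr
  · apply Filter.Eventually.of_forall
    intro θ z hzm
    have hne : SMce θ - z ≠ 0 := by
      intro h
      have := hdist z hzm θ
      rw [h] at this; simp at this; linarith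
    exact ((hasDerivAt_id z).const_add (SMce θ)).div
      ((hasDerivAt_id z).const_sub (SMce θ)) hne

lemma SMsingExp_continuousOn [IsFiniteMeasure μ] (hK : (SMK μ).Nonempty)
    (hco : μ (Set.Ico (0:ℝ) (2*Real.pi))ᶜ = 0) :
    ContinuousOn (singExp μ) (closedBall (0:ℂ) 1 \ SMK μ) := by
  intro z hz
  obtain ⟨hzb, hzK⟩ := hz
  have hzb' : Complex.abs z ≤ 1 := by simpa [mem_closedBall, SMdist_eq, Complex.norm_eq_abs] using hzb
  have hd : 0 < infDist z (SMK μ) := SMinfDist_pos hK hco hzK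
  set d := infDist z (SMK μ) with hd_def
  rw [Metric.continuousWithinAt_iff]
  intro ε hε
  have hπ := Real.pi_pos
  set Cst : ℝ := (μ univ).toReal / Real.pi * (1 / (d/2 * d)) + 1 with hCst
  have hC1 : (μ univ).toReal / Real.pi * (1 / (d/2 * d)) ≤ Cst - 1 := by
    simp only [hCst]; linarith
  have hCpos : 0 < Cst := by
    have : (0:ℝ) ≤ (μ univ).toReal / Real.pi * (1 / (d/2 * d)) := by positivity
    simp only [hCst]; linarith
  refine ⟨min (d/2) (ε / Cst), by positivity, ?_⟩
  intro w hw hwz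
  obtain ⟨hwb, hwK⟩ := hw
  have hwb' : Complex.abs w ≤ 1 := by simpa [mem_closedBall, SMdist_eq, Complex.norm_eq_abs] using hwb
  have hwd : 0 < infDist w (SMK μ) := SMinfDist_pos hK hco hwK
  have h1 : d / 2 ≤ infDist w (SMK μ) := by
    have h2 := infDist_le_infDist_add_dist (x := z) (y := w) (s := SMK μ)
    have hdist : dist z w < d/2 := by
      rw [dist_comm]; exact lt_of_lt_of_le hwz (min_le_left _ _)
    rw [← hd_def] at h2
    linarith
  rw [SMdist_eq]
  have hest := SMsingExp_sub (μ := μ) hwb' hzb' hwd hd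
  have habs : Complex.abs (w - z) < ε / Cst := by
    rw [← SMdist_eq]
    exact lt_of_lt_of_le hwz (min_le_right _ _)
  have habs0 : (0:ℝ) ≤ Complex.abs (w - z) := Complex.abs.nonneg _
  calc Complex.abs (singExp μ w - singExp μ z)
      ≤ (μ univ).toReal / Real.pi * Complex.abs (w - z) / (infDist w (SMK μ) * d) := hest
    _ ≤ (μ univ).toReal / Real.pi * Complex.abs (w - z) / (d/2 * d) := by
        apply div_le_div_of_nonneg_left (by positivity) (by positivity)
        apply mul_le_mul_of_nonneg_right h1 hd.le
    _ = (μ univ).toReal / Real.pi * (1 / (d/2 * d)) * Complex.abs (w - z) := by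
        field_simp
    _ ≤ Cst * Complex.abs (w - z) := by
        apply mul_le_mul_of_nonneg_right _ habs0
        linarith
    _ < Cst * (ε / Cst) := by
        exact mul_lt_mul_of_pos_left habs hCpos
    _ = ε := by field_simp

lemma SMF_continuousOn [IsFiniteMeasure μ] (hK : (SMK μ).Nonempty)
    (hco : μ (Set.Ico (0:ℝ) (2*Real.pi))ᶜ = 0)
    {f : ℂ → ℂ} (hfc : ContinuousOn f (closedBall (0:ℂ) 1))
    (hfK : ∀ z ∈ SMK μ, f z = 0) :
    ContinuousOn (fun z => singExp μ z * f z) (closedBall (0:ℂ) 1) := by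
  intro z₀ hz₀
  by_cases hzK : z₀ ∈ SMK μ
  · rw [Metric.continuousWithinAt_iff]
    intro ε hε
    have hf0 : f z₀ = 0 := hfK _ hzK
    have := hfc z₀ hz₀
    rw [Metric.continuousWithinAt_iff] at this
    obtain ⟨δ, hδ, hδ'⟩ := this ε hε
    refine ⟨δ, hδ, ?_⟩
    intro w hw hwd
    have hfw : Complex.abs (f w) < ε := by
      have := hδ' hw hwd
      rwa [SMdist_eq, hf0, sub_zero] at this
    rw [SMdist_eq, hf0, mul_zero, sub_zero, map_mul]
    by_cases hwK : w ∈ SMK μ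
    · rw [hfK _ hwK]; simpa using hε
    · have hwb' : Complex.abs w ≤ 1 := by simpa [mem_closedBall, SMdist_eq, Complex.norm_eq_abs] using hw
      have hS := SMabs_singExp_le_one (μ := μ) hwb' (SMinfDist_pos hK hco hwK)
      calc Complex.abs (singExp μ w) * Complex.abs (f w)
          ≤ 1 * Complex.abs (f w) :=
            mul_le_mul_of_nonneg_right hS (Complex.abs.nonneg _)
        _ = Complex.abs (f w) := one_mul _
        _ < ε := hfw
  · have hmem : closedBall (0:ℂ) 1 \ SMK μ ∈ 𝓝[closedBall (0:ℂ) 1] z₀ := by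
      rw [diff_eq, inter_comm]
      exact Filter.inter_mem
        (mem_nhdsWithin_of_mem_nhds ((SMK_compact hco).isClosed.isOpen_compl.mem_nhds hzK))
        self_mem_nhdsWithin
    exact ((SMsingExp_continuousOn hK hco z₀ ⟨hz₀, hzK⟩).mono_of_mem_nhdsWithin hmem).mul (hfc z₀ hz₀)


lemma SMdensity [IsFiniteMeasure μ] (hsing : μ.MutuallySingular volume) :
    ∀ᵐ θ ∂μ, ∀ N : ℝ, 0 < N →
      ∀ᶠ r in 𝓝[>] (0:ℝ), ENNReal.ofReal (N * r) ≤ μ (closedBall θ r) := by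
  have hrn : (volume : Measure ℝ).rnDeriv μ =ᵐ[μ] 0 :=
    (Measure.rnDeriv_eq_zero _ _).mpr hsing.symm
  filter_upwards [Besicovitch.ae_tendsto_rnDeriv (volume : Measure ℝ) μ, hrn] with θ h1 h2
  rw [h2] at h1
  intro N hN
  have hNne : ENNReal.ofReal (1/N) ≠ 0 := by
    simp only [ne_eq, ENNReal.ofReal_eq_zero, not_le]; positivity
  have hlt : ∀ᶠ r in 𝓝[>] (0:ℝ),
      volume (closedBall θ r) / μ (closedBall θ r) < ENNReal.ofReal (1/N) :=
    h1.eventually (gt_mem_nhds (by simpa [pos_iff_ne_zero] using hNne))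
  filter_upwards [hlt, self_mem_nhdsWithin] with r hr hrpos
  rw [mem_Ioi] at hrpos
  rw [Real.volume_closedBall] at hr
  by_contra hcon
  push_neg at hcon
  have hge : ENNReal.ofReal (1/N) ≤ ENNReal.ofReal (2*r) / μ (closedBall θ r) := by
    rw [ENNReal.le_div_iff_mul_le
      (Or.inr (by simp only [ne_eq, ENNReal.ofReal_eq_zero, not_le]; positivity))
      (Or.inl (measure_ne_top μ _))]
    calc ENNReal.ofReal (1/N) * μ (closedBall θ r)
        ≤ ENNReal.ofReal (1/N) * ENNReal.ofReal (N*r) :=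
          mul_le_mul_right hcon.le _
      _ = ENNReal.ofReal r := by
          rw [← ENNReal.ofReal_mul (by positivity)]
          congr 1; field_simp
      _ ≤ ENNReal.ofReal (2*r) := by
          apply ENNReal.ofReal_le_ofReal; linarith
  exact absurd hr (not_lt.mpr hge)

lemma SMexists_small [IsFiniteMeasure μ] (hsing : μ.MutuallySingular volume)
    (hK : (SMK μ).Nonempty) {θ₀ : ℝ} (hθ₀ : θ₀ ∈ SMKset μ) {δ ε : ℝ}
    (hδ : 0 < δ) (hε : 0 < ε) :
    ∃ z ∈ ball (0:ℂ) 1, Complex.abs (z - SMce θ₀) < δ ∧ Complex.abs (singExp μ z) < ε := by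
  have hπ := Real.pi_pos
  obtain ⟨N, hN1, hNε⟩ : ∃ N : ℝ, 1 ≤ N ∧ Real.exp (-(N / (8*Real.pi))) < ε := by
    have ha : Tendsto (fun N : ℝ => N/(8*Real.pi)) atTop atTop :=
      tendsto_id.atTop_div_const (by positivity)
    have h2 : Tendsto (fun N : ℝ => Real.exp (-(N/(8*Real.pi)))) atTop (nhds 0) :=
      Real.tendsto_exp_atBot.comp (tendsto_neg_atTop_atBot.comp ha)
    obtain ⟨N, hN⟩ := ((h2.eventually (gt_mem_nhds hε)).and (eventually_ge_atTop 1)).exists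
    exact ⟨N, hN.2, hN.1⟩
  have hNpos : (0:ℝ) < N := by linarith
  set A := {θ : ℝ | ∀ N' : ℝ, 0 < N' →
    ∀ᶠ r in 𝓝[>] (0:ℝ), ENNReal.ofReal (N' * r) ≤ μ (closedBall θ r)} with hA
  have hAc : μ Aᶜ = 0 := by
    have h := SMdensity (μ := μ) hsing
    rw [ae_iff] at h
    simpa [hA, Set.compl_setOf] using h
  have hAKc : μ (A ∩ SMKset μ)ᶜ = 0 := by
    rw [Set.compl_inter]
    exact measure_union_null hAc SMKset_null
  have hpos : 0 < μ (ball θ₀ (min (δ/4) 1) ∩ (A ∩ SMKset μ)) := by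
    rw [measure_inter_conull hAKc]
    exact hθ₀ _ (by positivity)
  obtain ⟨θ, hθball, hθA, hθK⟩ := nonempty_of_measure_ne_zero hpos.ne'
  -- pick a small radius
  have hIoo : Ioo (0:ℝ) (min (δ/4) (1/2)) ∈ 𝓝[>] (0:ℝ) :=
    Ioo_mem_nhdsGT_of_mem ⟨le_refl _, by positivity⟩
  obtain ⟨r, hrN, hrmem⟩ := ((hθA N hNpos).and hIoo).exists
  obtain ⟨hr0, hrlt⟩ := hrmem
  have hrδ : r < δ/4 := lt_of_lt_of_le hrlt (min_le_left _ _)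
  have hrhalf : r < 1/2 := by
    have := min_le_right (δ/4) (1/2); linarith [lt_of_lt_of_le hrlt (min_le_right (δ/4) (1/2))]
  set z : ℂ := ((1 - r : ℝ) : ℂ) * SMce θ with hz
  have habs_z : Complex.abs z = 1 - r := by
    rw [hz, map_mul, SMce_abs, mul_one, Complex.abs_ofReal, abs_of_pos (by linarith)]
  have hzball : z ∈ ball (0:ℂ) 1 := by
    rw [mem_ball, SMdist_eq, sub_zero, habs_z]; linarith
  have hzabs : Complex.abs z ≤ 1 := by rw [habs_z]; linarith
  have hzd : 0 < infDist z (SMK μ) := by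
    have := SMinfDist_ball (μ := μ) hK (z := z)
    rw [habs_z] at this; linarith
  have hzce : Complex.abs (SMce θ - z) = r := by
    have : SMce θ - z = ((r:ℝ):ℂ) * SMce θ := by rw [hz]; push_cast; ring
    rw [this, map_mul, SMce_abs, mul_one, Complex.abs_ofReal, abs_of_pos hr0]
  have hθdist : |θ - θ₀| < δ/4 := by
    have := mem_ball.mp hθball
    rw [Real.dist_eq] at this
    exact lt_of_lt_of_le this (min_le_of_left_le (le_refl _))
  have hdistz : Complex.abs (z - SMce θ₀) < δ := by
    calc Complex.abs (z - SMce θ₀)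
        ≤ Complex.abs (z - SMce θ) + Complex.abs (SMce θ - SMce θ₀) := by
          have : z - SMce θ₀ = (z - SMce θ) + (SMce θ - SMce θ₀) := by ring
          rw [this]; exact Complex.abs.add_le _ _
      _ ≤ r + |θ - θ₀| := by
          have h1 : Complex.abs (z - SMce θ) = r := by
            rw [← hzce]; exact Complex.abs.map_sub _ _
          have h2 := SMce_chord θ θ₀
          linarith
      _ < δ/4 + δ/4 := by linarith
      _ < δ := by linarith
  have hint : Integrable (SMg z) μ := SMg_integrable hzabs hzd
  have hlow : ∀ θ' ∈ closedBall θ r, 1/(4*r) ≤ (SMg z θ').re := by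
    intro θ' hθ'
    have hne : SMce θ' ≠ z := by
      intro h
      have := SMce_abs θ'
      rw [h, habs_z] at this
      linarith
    rw [SMg_re_eq hne]
    have h1 : Complex.abs (SMce θ' - z) ≤ 2*r := by
      calc Complex.abs (SMce θ' - z)
          ≤ Complex.abs (SMce θ' - SMce θ) + Complex.abs (SMce θ - z) := by
            have h : SMce θ' - z = (SMce θ' - SMce θ) + (SMce θ - z) := by ring
            rw [h]; exact Complex.abs.add_le _ _
        _ ≤ |θ' - θ| + r := by rw [hzce]; linarith [SMce_chord θ' θ]
        _ ≤ 2*r := by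
            have := mem_closedBall.mp hθ'
            rw [Real.dist_eq] at this
            linarith
    have h2 : 1 - Complex.abs z^2 = r*(2 - r) := by rw [habs_z]; ring
    have h4 : 0 < Complex.abs (SMce θ' - z) := Complex.abs.pos (sub_ne_zero.mpr hne)
    rw [h2]
    calc 1/(4*r) = (r*1)/(4*r^2) := by field_simp
      _ ≤ (r*(2-r))/(4*r^2) := by gcongr; linarith
      _ ≤ (r*(2-r))/(Complex.abs (SMce θ' - z)^2) := by
          gcongr
          · nlinarith
          · nlinarith
  have hμr : N * r ≤ (μ (closedBall θ r)).toReal := by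
    have h := ENNReal.toReal_mono (measure_ne_top μ _) hrN
    rwa [ENNReal.toReal_ofReal (by positivity)] at h
  have hInt_low : N/4 ≤ ∫ θ', (SMg z θ').re ∂μ := by
    have hsub : ∫ θ' in closedBall θ r, (SMg z θ').re ∂μ ≤ ∫ θ', (SMg z θ').re ∂μ :=
      setIntegral_le_integral (hint.re)
        (Filter.Eventually.of_forall fun θ' => SMg_re_nonneg hzabs θ')
    have hset : 1/(4*r) * (μ (closedBall θ r)).toReal
        ≤ ∫ θ' in closedBall θ r, (SMg z θ').re ∂μ :=
      by rw [mul_comm (1/(4*r)), ← measureReal_def]; exact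
          setIntegral_ge_of_const_le measurableSet_closedBall (measure_ne_top μ _) hlow
            (hint.re.integrableOn)
    calc N/4 = 1/(4*r) * (N*r) := by field_simp
      _ ≤ 1/(4*r) * (μ (closedBall θ r)).toReal :=
          mul_le_mul_of_nonneg_left hμr (by positivity)
      _ ≤ ∫ θ' in closedBall θ r, (SMg z θ').re ∂μ := hset
      _ ≤ ∫ θ', (SMg z θ').re ∂μ := hsub
  refine ⟨z, hzball, hdistz, ?_⟩
  rw [SMsingExp_def, Complex.abs_exp]
  have hre : (-(1/(2*Real.pi):ℂ) * ∫ θ', SMg z θ' ∂μ).re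
      = -(1/(2*Real.pi)) * ∫ θ', (SMg z θ').re ∂μ := by
    have hcast : (-(1/(2*Real.pi):ℂ)) = ((-(1/(2*Real.pi)):ℝ):ℂ) := by push_cast; ring
    rw [hcast, Complex.re_ofReal_mul]
    congr 1
    have h := integral_re hint
    simp only [RCLike.re_to_complex] at h
    rw [← h]
  rw [hre]
  have heq : -(1/(2*Real.pi)) * (N/4) = -(N/(8*Real.pi)) := by
    rw [neg_mul]
    congr 1
    rw [div_mul_div_comm, one_mul]
    congr 1
    ring
  calc Real.exp (-(1/(2*Real.pi)) * ∫ θ', (SMg z θ').re ∂μ)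
      ≤ Real.exp (-(N/(8*Real.pi))) := by
        apply Real.exp_le_exp.mpr
        rw [← heq]
        apply mul_le_mul_of_nonpos_left hInt_low
        have : (0:ℝ) < 1/(2*Real.pi) := by positivity
        linarith
    _ < ε := hNε

lemma SMK_subset_innerSpec [IsFiniteMeasure μ] (hsing : μ.MutuallySingular volume)
    (hK : (SMK μ).Nonempty) {S : ℂ → ℂ} (hS : ∀ z ∈ ball (0:ℂ) 1, S z = singExp μ z) :
    SMK μ ⊆ innerSpec S := by
  rintro ξ ⟨θ₀, hθ₀, rfl⟩
  have hξcb : SMce θ₀ ∈ closedBall (0:ℂ) 1 := by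
    rw [mem_closedBall, SMdist_eq, sub_zero, SMce_abs]
  refine ⟨hξcb, ?_⟩
  haveI hnb : (𝓝[ball (0:ℂ) 1] (SMce θ₀)).NeBot := by
    rw [← mem_closure_iff_nhdsWithin_neBot, closure_ball (0:ℂ) one_ne_zero]
    exact hξcb
  have hub : ∀ᶠ z in 𝓝[ball (0:ℂ) 1] (SMce θ₀), Complex.abs (S z) ≤ 1 := by
    filter_upwards [self_mem_nhdsWithin] with z hz
    rw [hS z hz]
    have hz1 : Complex.abs z < 1 := by
      rw [mem_ball, SMdist_eq, sub_zero] at hz; exact hz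
    exact SMabs_singExp_le_one hz1.le
      (lt_of_lt_of_le (by linarith) (SMinfDist_ball hK))
  have hbdd : IsBoundedUnder (· ≥ ·) (𝓝[ball (0:ℂ) 1] (SMce θ₀))
      (fun z => Complex.abs (S z)) :=
    Filter.isBoundedUnder_of ⟨0, fun z => Complex.abs.nonneg _⟩
  apply le_antisymm
  · have hle : ∀ ε : ℝ, 0 < ε →
        liminf (fun z => Complex.abs (S z)) (𝓝[ball (0:ℂ) 1] (SMce θ₀)) ≤ ε := by
      intro ε hε
      apply liminf_le_of_frequently_le _ hbdd
      rw [Filter.frequently_iff]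
      intro U hU
      obtain ⟨t, htopen, hξt, hsub⟩ := mem_nhdsWithin.mp hU
      obtain ⟨δ, hδpos, hball⟩ := Metric.isOpen_iff.mp htopen _ hξt
      obtain ⟨z, hzball, hzdist, hzsmall⟩ := SMexists_small hsing hK hθ₀ hδpos hε
      refine ⟨z, hsub ⟨hball ?_, hzball⟩, ?_⟩
      · rw [mem_ball, SMdist_eq]; exact hzdist
      · rw [hS z hzball]; exact hzsmall.le
    by_contra hc
    push_neg at hc
    have h2 := hle _ (half_pos hc)
    simp only [Complex.abs_apply] at h2
    linarith
  · exact le_liminf_of_le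
      (IsBoundedUnder.isCoboundedUnder_ge ⟨1, Filter.eventually_map.mpr hub⟩)
      (Filter.Eventually.of_forall (fun z => Complex.abs.nonneg _))


lemma SMmem_sphere_abs {ξ : ℂ} (h : ξ ∈ sphere (0:ℂ) 1) : Complex.abs ξ = 1 := by
  simpa [mem_sphere_iff_norm, Complex.norm_eq_abs] using h

lemma SMsphere_dist {ξ ζ : ℂ} (hξ : ξ ∈ sphere (0:ℂ) 1) (hζ : ζ ∈ sphere (0:ℂ) 1) :
    Complex.abs (ξ - ζ) ≤ 2 := by
  calc Complex.abs (ξ - ζ) ≤ Complex.abs ξ + Complex.abs ζ := by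
        rw [sub_eq_add_neg]
        refine le_trans (Complex.abs.add_le _ _) ?_
        rw [Complex.abs.map_neg]
    _ = 2 := by rw [SMmem_sphere_abs hξ, SMmem_sphere_abs hζ]; norm_num

lemma SMsupNorm_spec {f : ℂ → ℂ} (hfc : ContinuousOn f (closedBall (0:ℂ) 1)) :
    (∀ z ∈ closedBall (0:ℂ) 1, Complex.abs (f z) ≤ supNorm f) ∧ 0 ≤ supNorm f := by
  have himg : IsCompact ((fun z => Complex.abs (f z)) '' closedBall (0:ℂ) 1) :=
    (isCompact_closedBall (0:ℂ) 1).image_of_continuousOn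
      (Complex.continuous_abs.comp_continuousOn hfc)
  have hbdd : BddAbove ((fun z => Complex.abs (f z)) '' closedBall (0:ℂ) 1) :=
    himg.bddAbove
  have h1 : ∀ z ∈ closedBall (0:ℂ) 1, Complex.abs (f z) ≤ supNorm f := by
    intro z hz
    exact le_csSup hbdd (mem_image_of_mem _ hz)
  refine ⟨h1, ?_⟩
  calc (0:ℝ) ≤ Complex.abs (f 0) := Complex.abs.nonneg _
    _ ≤ supNorm f := h1 0 (mem_closedBall_self zero_le_one)

lemma SMsupNorm_le {f : ℂ → ℂ} {B : ℝ} (hB : 0 ≤ B)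
    (h : ∀ z ∈ closedBall (0:ℂ) 1, Complex.abs (f z) ≤ B) : supNorm f ≤ B := by
  apply Real.sSup_le _ hB
  rintro x ⟨z, hz, rfl⟩
  exact h z hz

lemma SMlipSemi_le {ω : ModulusOfContinuity} {f : ℂ → ℂ} {B : ℝ} (hB : 0 ≤ B)
    (h : ∀ ξ ∈ sphere (0:ℂ) 1, ∀ ζ ∈ sphere (0:ℂ) 1, ξ ≠ ζ →
      Complex.abs (f ξ - f ζ) ≤ B * ω.toFun (Complex.abs (ξ - ζ))) :
    lipSemi ω f ≤ B := by
  apply Real.sSup_le _ hB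
  rintro x ⟨⟨ξ, ζ⟩, ⟨hξ, hζ, hne⟩, rfl⟩
  have ht0 : 0 < Complex.abs (ξ - ζ) := Complex.abs.pos (sub_ne_zero.mpr hne)
  have hωpos : 0 < ω.toFun (Complex.abs (ξ - ζ)) :=
    SMomega_pos ht0 (SMsphere_dist hξ hζ)
  change Complex.abs (f ξ - f ζ) / ω.toFun (Complex.abs (ξ - ζ)) ≤ B
  rw [div_le_iff₀ hωpos]
  exact h ξ hξ ζ hζ hne

lemma SMlipSemi_spec {ω : ModulusOfContinuity} {f : ℂ → ℂ} (hf : MemLip ω f) :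
    (∀ ξ ∈ sphere (0:ℂ) 1, ∀ ζ ∈ sphere (0:ℂ) 1, ξ ≠ ζ →
      Complex.abs (f ξ - f ζ) ≤ lipSemi ω f * ω.toFun (Complex.abs (ξ - ζ)))
    ∧ 0 ≤ lipSemi ω f := by
  obtain ⟨hfc, hfd, C, hC⟩ := hf
  set Q := ((fun p : ℂ × ℂ => Complex.abs (f p.1 - f p.2) / ω.toFun (Complex.abs (p.1 - p.2))) ''
    {p : ℂ × ℂ | p.1 ∈ sphere (0:ℂ) 1 ∧ p.2 ∈ sphere (0:ℂ) 1 ∧ p.1 ≠ p.2}) with hQ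
  have hQsemi : lipSemi ω f = sSup Q := rfl
  have hbdd : BddAbove Q := by
    refine ⟨max C 0, ?_⟩
    rintro x ⟨⟨ξ, ζ⟩, ⟨hξ, hζ, hne⟩, rfl⟩
    have ht0 : 0 < Complex.abs (ξ - ζ) := Complex.abs.pos (sub_ne_zero.mpr hne)
    have hωpos : 0 < ω.toFun (Complex.abs (ξ - ζ)) :=
      SMomega_pos ht0 (SMsphere_dist hξ hζ)
    refine le_trans ?_ (le_max_left _ _)
    rw [div_le_iff₀ hωpos]
    exact hC ξ hξ ζ hζ hne
  have hmem : ∀ ξ ∈ sphere (0:ℂ) 1, ∀ ζ ∈ sphere (0:ℂ) 1, ξ ≠ ζ →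
      Complex.abs (f ξ - f ζ) / ω.toFun (Complex.abs (ξ - ζ)) ≤ lipSemi ω f := by
    intro ξ hξ ζ hζ hne
    rw [hQsemi]
    exact le_csSup hbdd ⟨(ξ, ζ), ⟨hξ, hζ, hne⟩, rfl⟩
  constructor
  · intro ξ hξ ζ hζ hne
    have ht0 : 0 < Complex.abs (ξ - ζ) := Complex.abs.pos (sub_ne_zero.mpr hne)
    have hωpos : 0 < ω.toFun (Complex.abs (ξ - ζ)) :=
      SMomega_pos ht0 (SMsphere_dist hξ hζ)
    rw [← div_le_iff₀ hωpos]
    exact hmem ξ hξ ζ hζ hne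
  · have h1 : (1:ℂ) ∈ sphere (0:ℂ) 1 := by simp [mem_sphere_iff_norm]
    have h2 : (-1:ℂ) ∈ sphere (0:ℂ) 1 := by simp [mem_sphere_iff_norm]
    have hne : (1:ℂ) ≠ -1 := by norm_num
    refine le_trans ?_ (hmem 1 h1 (-1) h2 hne)
    have habs2 : Complex.abs ((1:ℂ) - (-1)) = 2 := by
      norm_num
    apply div_nonneg (Complex.abs.nonneg _)
    rw [habs2]
    exact SMomega_nonneg (by norm_num) le_rfl

-- MORE
end SMaux

set_option maxHeartbeats 2000000 in
/-- **Lemma (multi).** Multiplication by a singular inner function `S` with `σ(S) ⊆ E ⊆ E_f`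
and mass at most `M` maps `Lip_ω` into itself with norm control depending only on `ω, M`,
and preserves `J_ω(E)`. -/
theorem singular_multiplier
    (ω : ModulusOfContinuity) (hω : EtaPos ω)
    (M : ℝ) (hM : 0 < M) :
    ∃ c > (0:ℝ), ∀ f : ℂ → ℂ, MemLip ω f →
      ∀ E : Set ℂ, IsClosed E → E ⊆ bdryZeroSet f →
      ∀ S : ℂ → ℂ, ∀ μ : Measure ℝ, IsSingularInnerWith S μ →
        innerSpec S ⊆ E → μ Set.univ ≤ ENNReal.ofReal M →
      ∃ F : ℂ → ℂ,
        (∀ z ∈ ball (0:ℂ) 1, F z = S z * f z) ∧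
        MemLip ω F ∧ lipNorm ω F ≤ c * lipNorm ω f ∧
        (MemJ ω E f → MemJ ω E F) := by
  obtain ⟨η₀, hη₀pos, hη₀⟩ := hω
  set η : ℝ := min η₀ 1 with hηdef
  have hηpos : 0 < η := lt_min hη₀pos one_pos
  have hη1 : η ≤ 1 := min_le_right _ _
  have hηω : ∀ t : ℝ, 0 < t → t ≤ 1 → η * ω.toFun t ≤ ω.toFun (t^2) := by
    intro t h0 h1
    have h := hη₀ t ⟨h0, h1⟩
    have hω0 : 0 ≤ ω.toFun t := SMomega_nonneg h0.le (by linarith)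
    have hmin : η ≤ η₀ := min_le_left _ _
    calc η * ω.toFun t ≤ η₀ * ω.toFun t := mul_le_mul_of_nonneg_right hmin hω0
      _ ≤ ω.toFun (t^2) := h
  have hπ := Real.pi_pos
  have hω4 : 0 < ω.toFun (1/4) := SMomega_pos (by norm_num) (by norm_num)
  set c₀ : ℝ := 2/(ω.toFun (1/4)) + 2 + 4/η + M/(2*Real.pi*η) with hc₀def
  have hq1 : 0 ≤ 2/(ω.toFun (1/4)) := by positivity
  have hq2 : 0 ≤ 4/η := by positivity
  have hq3 : 0 ≤ M/(2*Real.pi*η) := by positivity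
  have hc₀2 : 2 ≤ c₀ := by rw [hc₀def]; linarith
  have hc₀pos : 0 < c₀ := by linarith
  refine ⟨1 + c₀, by linarith, ?_⟩
  intro f hf E hEcl hEsub S μ hSμ hspec hμM
  obtain ⟨hμfin, hμco, hμsing, hμS⟩ := hSμ
  haveI : IsFiniteMeasure μ := ⟨hμfin⟩
  have hfc := hf.1
  have hfd := hf.2.1
  obtain ⟨hA, hA0⟩ := SMsupNorm_spec hfc
  obtain ⟨hL, hL0⟩ := SMlipSemi_spec hf
  set A := supNorm f with hAdef
  set L := lipSemi ω f with hLdef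
  have hlipf : lipNorm ω f = A + L := rfl
  by_cases hμ0 : μ = 0
  · refine ⟨f, ?_, hf, ?_, fun h => h⟩
    · intro z hz
      rw [hμS z hz, hμ0]
      simp
    · rw [hlipf]
      have hexp : (1+c₀)*(A+L) = (A+L) + c₀*(A+L) := by ring
      have hnn : 0 ≤ c₀*(A+L) := mul_nonneg hc₀pos.le (by linarith)
      linarith
  -- main case : μ ≠ 0
  have hKne : (SMKset μ).Nonempty := by
    by_contra h
    rw [not_nonempty_iff_eq_empty] at h
    apply hμ0
    have h2 : μ univ = 0 := by
      have h3 := SMKset_null (μ := μ)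
      rwa [h, compl_empty] at h3
    exact Measure.measure_univ_eq_zero.mp h2
  have hKcne : (SMK μ).Nonempty := hKne.image _
  have hKcE : SMK μ ⊆ E :=
    subset_trans (SMK_subset_innerSpec hμsing hKcne hμS) hspec
  have hEne : E.Nonempty := hKcne.mono hKcE
  have hEsp : E ⊆ sphere (0:ℂ) 1 := fun x hx => (hEsub hx).1
  have hfE : ∀ x ∈ E, f x = 0 := fun x hx => (hEsub hx).2
  have hEcp : IsCompact E :=
    (isCompact_sphere (0:ℂ) 1).of_isClosed_subset hEcl hEsp
  have hfK : ∀ z ∈ SMK μ, f z = 0 := fun z hz => hfE z (hKcE hz)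
  set F : ℂ → ℂ := fun z => singExp μ z * f z with hFdef
  have hμM' : (μ univ).toReal ≤ M := ENNReal.toReal_le_of_le_ofReal hM.le hμM
  have hspcb : sphere (0:ℂ) 1 ⊆ closedBall (0:ℂ) 1 := sphere_subset_closedBall
  have hSle : ∀ z ∈ closedBall (0:ℂ) 1, z ∉ SMK μ → Complex.abs (singExp μ z) ≤ 1 := by
    intro z hz hzK
    have hz1 : Complex.abs z ≤ 1 := by
      simpa [mem_closedBall, SMdist_eq, Complex.norm_eq_abs] using hz
    exact SMabs_singExp_le_one hz1 (SMinfDist_pos hKcne hμco hzK)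
  have hFle : ∀ z ∈ closedBall (0:ℂ) 1, Complex.abs (F z) ≤ Complex.abs (f z) := by
    intro z hz
    by_cases hzK : z ∈ SMK μ
    · have : F z = 0 := by rw [hFdef]; simp [hfK z hzK]
      rw [this]; simp [Complex.abs.nonneg]
    · rw [hFdef]
      simp only
      rw [map_mul]
      calc Complex.abs (singExp μ z) * Complex.abs (f z)
          ≤ 1 * Complex.abs (f z) :=
            mul_le_mul_of_nonneg_right (hSle z hz hzK) (Complex.abs.nonneg _)
        _ = Complex.abs (f z) := one_mul _
  have hinfE2 : ∀ ζ : ℂ, ζ ∈ sphere (0:ℂ) 1 → infDist ζ E ≤ 2 := by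
    intro ζ hζ
    obtain ⟨e, heE⟩ := hEne
    calc infDist ζ E ≤ dist ζ e := infDist_le_dist_of_mem heE
      _ = Complex.abs (ζ - e) := SMdist_eq _ _
      _ ≤ 2 := SMsphere_dist hζ (hEsp heE)
  have hinfK2 : ∀ ζ : ℂ, ζ ∈ sphere (0:ℂ) 1 → infDist ζ (SMK μ) ≤ 2 := by
    intro ζ hζ
    obtain ⟨k, hkK⟩ := hKcne
    calc infDist ζ (SMK μ) ≤ dist ζ k := infDist_le_dist_of_mem hkK
      _ = Complex.abs (ζ - k) := SMdist_eq _ _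
      _ ≤ 2 := SMsphere_dist hζ (SMK_subset_sphere hkK)
  have hfdistE : ∀ ζ : ℂ, ζ ∈ sphere (0:ℂ) 1 →
      Complex.abs (f ζ) ≤ L * ω.toFun (infDist ζ E) := by
    intro ζ hζ
    obtain ⟨e, heE, hedist⟩ := hEcp.exists_infDist_eq_dist hEne ζ
    by_cases hζe : ζ = e
    · have h0 : infDist ζ E = 0 := by rw [hedist, hζe, dist_self]
      rw [h0, ω.zero, mul_zero, hζe, hfE e heE]
      simp
    · have h := hL ζ hζ e (hEsp heE) hζe
      rw [hfE e heE, sub_zero] at h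
      rwa [hedist, SMdist_eq]
  -- the key asymmetric estimate for nearby boundary points
  have asym : ∀ L₁ : ℝ, 0 ≤ L₁ → ∀ ξ ζ : ℂ, ξ ∈ sphere (0:ℂ) 1 → ζ ∈ sphere (0:ℂ) 1 →
      ξ ≠ ζ → Complex.abs (ξ - ζ) < 1/4 →
      Complex.abs (f ξ - f ζ) ≤ L₁ * ω.toFun (Complex.abs (ξ - ζ)) →
      Complex.abs (f ζ) ≤ L₁ * ω.toFun (infDist ζ E) →
      infDist ζ (SMK μ) ≤ infDist ξ (SMK μ) →
      Complex.abs (F ξ - F ζ) ≤ c₀ * (L₁ * ω.toFun (Complex.abs (ξ - ζ))) := by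
    intro L₁ hL₁ ξ ζ hξ hζ hne ht4 hpair hfζb hord
    set t := Complex.abs (ξ - ζ) with htdef
    have ht0 : 0 < t := Complex.abs.pos (sub_ne_zero.mpr hne)
    have ht2 : t ≤ 2 := SMsphere_dist hξ hζ
    have hωt0 : 0 < ω.toFun t := SMomega_pos ht0 ht2
    have hLωt : 0 ≤ L₁ * ω.toFun t := mul_nonneg hL₁ hωt0.le
    by_cases hξK : ξ ∈ SMK μ
    · have hFξ : F ξ = 0 := by rw [hFdef]; simp [hfK ξ hξK]
      have heq : Complex.abs (F ξ - F ζ) = Complex.abs (F ζ) := by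
        rw [hFξ, zero_sub, Complex.abs.map_neg]
      have h3 : Complex.abs (f ζ) = Complex.abs (f ξ - f ζ) := by
        rw [hfE ξ (hKcE hξK), zero_sub, Complex.abs.map_neg]
      calc Complex.abs (F ξ - F ζ) = Complex.abs (F ζ) := heq
        _ ≤ Complex.abs (f ζ) := hFle ζ (hspcb hζ)
        _ = Complex.abs (f ξ - f ζ) := h3
        _ ≤ L₁ * ω.toFun t := hpair
        _ ≤ c₀ * (L₁ * ω.toFun t) := by
            have h9 : 1 * (L₁ * ω.toFun t) ≤ c₀ * (L₁ * ω.toFun t) :=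
              mul_le_mul_of_nonneg_right (by linarith) hLωt
            linarith
    by_cases hζK : ζ ∈ SMK μ
    · have hFζ : F ζ = 0 := by rw [hFdef]; simp [hfK ζ hζK]
      have h3 : Complex.abs (f ξ) = Complex.abs (f ξ - f ζ) := by
        rw [hfE ζ (hKcE hζK), sub_zero]
      calc Complex.abs (F ξ - F ζ) = Complex.abs (F ξ) := by rw [hFζ, sub_zero]
        _ ≤ Complex.abs (f ξ) := hFle ξ (hspcb hξ)
        _ = Complex.abs (f ξ - f ζ) := h3
        _ ≤ L₁ * ω.toFun t := hpair
        _ ≤ c₀ * (L₁ * ω.toFun t) := by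
            have h9 : 1 * (L₁ * ω.toFun t) ≤ c₀ * (L₁ * ω.toFun t) :=
              mul_le_mul_of_nonneg_right (by linarith) hLωt
            linarith
    -- both points off K
    have hdζ : 0 < infDist ζ (SMK μ) := SMinfDist_pos hKcne hμco hζK
    have hdξ : 0 < infDist ξ (SMK μ) := SMinfDist_pos hKcne hμco hξK
    set dζ := infDist ζ (SMK μ) with hdζdef
    set dξ := infDist ξ (SMK μ) with hdξdef
    set s := Real.sqrt t with hsdef
    have hs0 : 0 < s := Real.sqrt_pos.mpr ht0
    have hs2 : s^2 = t := Real.sq_sqrt ht0.le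
    have hshalf : s < 1/2 := by
      have h := Real.sqrt_lt_sqrt ht0.le ht4
      rwa [show (1/4:ℝ) = (1/2)^2 by norm_num, Real.sqrt_sq (by norm_num : (0:ℝ) ≤ 1/2)] at h
    have hω2s : ω.toFun (2*s) ≤ 2 * ω.toFun s := SMomega_double hs0 (by linarith)
    have hωs : η * ω.toFun s ≤ ω.toFun t := by rw [← hs2]; exact hηω s hs0 (by linarith)
    have hωs0 : 0 ≤ ω.toFun s := SMomega_nonneg hs0.le (by linarith)
    have hω2s0 : 0 ≤ ω.toFun (2*s) := SMomega_nonneg (by linarith) (by linarith)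
    have hω2st : η * ω.toFun (2*s) ≤ 2 * ω.toFun t := by
      calc η * ω.toFun (2*s) ≤ η * (2 * ω.toFun s) :=
            mul_le_mul_of_nonneg_left hω2s hηpos.le
        _ = 2 * (η * ω.toFun s) := by ring
        _ ≤ 2 * ω.toFun t := by linarith
    have hdec : F ξ - F ζ = singExp μ ξ * (f ξ - f ζ) + f ζ * (singExp μ ξ - singExp μ ζ) := by
      rw [hFdef]; ring
    have hSξ : Complex.abs (singExp μ ξ) ≤ 1 := hSle ξ (hspcb hξ) hξK
    have hSζ : Complex.abs (singExp μ ζ) ≤ 1 := hSle ζ (hspcb hζ) hζK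
    have htri : Complex.abs (F ξ - F ζ) ≤ L₁ * ω.toFun t +
        Complex.abs (f ζ) * Complex.abs (singExp μ ξ - singExp μ ζ) := by
      rw [hdec]
      refine le_trans (Complex.abs.add_le _ _) ?_
      rw [map_mul, map_mul]
      have h1 : Complex.abs (singExp μ ξ) * Complex.abs (f ξ - f ζ) ≤ L₁ * ω.toFun t := by
        calc Complex.abs (singExp μ ξ) * Complex.abs (f ξ - f ζ)
            ≤ 1 * Complex.abs (f ξ - f ζ) :=
              mul_le_mul_of_nonneg_right hSξ (Complex.abs.nonneg _)
          _ = Complex.abs (f ξ - f ζ) := one_mul _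
          _ ≤ L₁ * ω.toFun t := hpair
      linarith
    have hρζ : infDist ζ E ≤ dζ := infDist_le_infDist_of_subset hKcE hKcne
    have hρζ0 : 0 ≤ infDist ζ E := infDist_nonneg
    by_cases hcase : dζ ≤ 2*s
    · -- near case
      have hmono : ω.toFun (infDist ζ E) ≤ ω.toFun (2*s) :=
        ω.mono ⟨hρζ0, by linarith [hρζ.trans hcase]⟩ ⟨by linarith, by linarith⟩
          (hρζ.trans hcase)
      have h1 : Complex.abs (f ζ) ≤ L₁ * ω.toFun (2*s) :=
        le_trans hfζb (mul_le_mul_of_nonneg_left hmono hL₁)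
      have hΔS : Complex.abs (singExp μ ξ - singExp μ ζ) ≤ 2 := by
        rw [sub_eq_add_neg]
        refine le_trans (Complex.abs.add_le _ _) ?_
        rw [Complex.abs.map_neg]
        linarith
      have hsecond : Complex.abs (f ζ) * Complex.abs (singExp μ ξ - singExp μ ζ)
          ≤ (4/η) * (L₁ * ω.toFun t) := by
        rw [div_mul_eq_mul_div, le_div_iff₀ hηpos]
        have e1 : Complex.abs (f ζ) * Complex.abs (singExp μ ξ - singExp μ ζ)
            ≤ (L₁ * ω.toFun (2*s)) * 2 :=
          mul_le_mul h1 hΔS (Complex.abs.nonneg _) (by positivity)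
        have e1' : Complex.abs (f ζ) * Complex.abs (singExp μ ξ - singExp μ ζ) * η
            ≤ (L₁ * ω.toFun (2*s)) * 2 * η :=
          mul_le_mul_of_nonneg_right e1 hηpos.le
        have e2 : L₁ * (η * ω.toFun (2*s)) ≤ L₁ * (2 * ω.toFun t) :=
          mul_le_mul_of_nonneg_left hω2st hL₁
        linarith
      have hfac : (1 + 4/η) * (L₁ * ω.toFun t) ≤ c₀ * (L₁ * ω.toFun t) :=
        mul_le_mul_of_nonneg_right (by linarith) hLωt
      calc Complex.abs (F ξ - F ζ)
          ≤ L₁ * ω.toFun t + (4/η) * (L₁ * ω.toFun t) := by linarith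
        _ = (1 + 4/η) * (L₁ * ω.toFun t) := by ring
        _ ≤ c₀ * (L₁ * ω.toFun t) := hfac
    · -- far case
      push_neg at hcase
      have hdξ2s : 2*s ≤ dξ := le_trans hcase.le hord
      have hdζ2 : dζ ≤ 2 := hinfK2 ζ hζ
      have hΔS : Complex.abs (singExp μ ξ - singExp μ ζ) ≤ M/Real.pi * t / (dξ * dζ) := by
        have h := SMsingExp_sub (μ := μ) (le_of_eq (SMmem_sphere_abs hξ))
          (le_of_eq (SMmem_sphere_abs hζ)) hdξ hdζ
        refine le_trans h ?_
        gcongr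
      have hfζ3 : Complex.abs (f ζ) ≤ L₁ * ω.toFun dζ := by
        refine le_trans hfζb (mul_le_mul_of_nonneg_left ?_ hL₁)
        exact ω.mono ⟨hρζ0, by linarith⟩ ⟨hdζ.le, hdζ2⟩ hρζ
      have hquot : ω.toFun dζ * (2*s) ≤ ω.toFun (2*s) * dζ :=
        SMomega_quot (by positivity) hcase.le hdζ2
      have hωdζ0 : 0 ≤ ω.toFun dζ := SMomega_nonneg hdζ.le hdζ2
      -- core algebraic inequality : 2 η (ω dζ) t ≤ (ω t) dζ dξ
      have gfinal : 2*η*(ω.toFun dζ * t) ≤ ω.toFun t * dζ * dξ := by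
        have g1 : 2*η*(ω.toFun dζ * t) = (ω.toFun dζ * (2*s))*(η*s) := by
          rw [← hs2]; ring
        have g2 : (ω.toFun dζ * (2*s))*(η*s) ≤ (ω.toFun (2*s) * dζ)*(η*s) :=
          mul_le_mul_of_nonneg_right hquot (by positivity)
        have g3 : (ω.toFun (2*s) * dζ)*(η*s) = (η * ω.toFun (2*s))*(dζ*s) := by ring
        have g4 : (η * ω.toFun (2*s))*(dζ*s) ≤ (2 * ω.toFun t)*(dζ*s) :=
          mul_le_mul_of_nonneg_right hω2st (by positivity)
        have g5 : (2 * ω.toFun t)*(dζ*s) = (ω.toFun t * dζ)*(2*s) := by ring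
        have g6 : (ω.toFun t * dζ)*(2*s) ≤ (ω.toFun t * dζ)*dξ :=
          mul_le_mul_of_nonneg_left hdξ2s (by positivity)
        calc 2*η*(ω.toFun dζ * t) = (ω.toFun dζ * (2*s))*(η*s) := g1
          _ ≤ (ω.toFun (2*s) * dζ)*(η*s) := g2
          _ = (η * ω.toFun (2*s))*(dζ*s) := g3
          _ ≤ (2 * ω.toFun t)*(dζ*s) := g4
          _ = (ω.toFun t * dζ)*(2*s) := g5
          _ ≤ (ω.toFun t * dζ)*dξ := g6
          _ = ω.toFun t * dζ * dξ := by ring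
      have hsecond : Complex.abs (f ζ) * Complex.abs (singExp μ ξ - singExp μ ζ)
          ≤ M/(2*Real.pi*η) * (L₁ * ω.toFun t) := by
        have hb1 : Complex.abs (f ζ) * Complex.abs (singExp μ ξ - singExp μ ζ)
            ≤ (L₁ * ω.toFun dζ) * (M/Real.pi * t / (dξ * dζ)) :=
          mul_le_mul hfζ3 hΔS (Complex.abs.nonneg _) (by positivity)
        refine le_trans hb1 ?_
        have heq1 : (L₁ * ω.toFun dζ) * (M/Real.pi * t / (dξ * dζ))
            = (L₁*M*(ω.toFun dζ * t))/(Real.pi*(dξ*dζ)) := by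
          field_simp
        have heq2 : M/(2*Real.pi*η) * (L₁ * ω.toFun t)
            = (M*(L₁ * ω.toFun t))/(2*Real.pi*η) := by ring
        rw [heq1, heq2, div_le_div_iff₀ (by positivity) (by positivity)]
        linarith [mul_le_mul_of_nonneg_left gfinal
          (show (0:ℝ) ≤ Real.pi*L₁*M by positivity)]
      have hfac : (1 + M/(2*Real.pi*η)) * (L₁ * ω.toFun t) ≤ c₀ * (L₁ * ω.toFun t) :=
        mul_le_mul_of_nonneg_right (by linarith) hLωt
      calc Complex.abs (F ξ - F ζ)
          ≤ L₁ * ω.toFun t + M/(2*Real.pi*η) * (L₁ * ω.toFun t) := by linarith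
        _ = (1 + M/(2*Real.pi*η)) * (L₁ * ω.toFun t) := by ring
        _ ≤ c₀ * (L₁ * ω.toFun t) := hfac
  -- symmetric version
  have key : ∀ L₁ : ℝ, 0 ≤ L₁ → ∀ ξ ζ : ℂ, ξ ∈ sphere (0:ℂ) 1 → ζ ∈ sphere (0:ℂ) 1 →
      ξ ≠ ζ → Complex.abs (ξ - ζ) < 1/4 →
      Complex.abs (f ξ - f ζ) ≤ L₁ * ω.toFun (Complex.abs (ξ - ζ)) →
      Complex.abs (f ξ) ≤ L₁ * ω.toFun (infDist ξ E) →
      Complex.abs (f ζ) ≤ L₁ * ω.toFun (infDist ζ E) →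
      Complex.abs (F ξ - F ζ) ≤ c₀ * (L₁ * ω.toFun (Complex.abs (ξ - ζ))) := by
    intro L₁ hL₁ ξ ζ hξ hζ hne ht4 hpair hfξb hfζb
    rcases le_total (infDist ζ (SMK μ)) (infDist ξ (SMK μ)) with hord | hord
    · exact asym L₁ hL₁ ξ ζ hξ hζ hne ht4 hpair hfζb hord
    · have h := asym L₁ hL₁ ζ ξ hζ hξ hne.symm
        (by rwa [Complex.abs.map_sub])
        (by rwa [Complex.abs.map_sub, show Complex.abs (ζ - ξ) = Complex.abs (ξ - ζ) from
          Complex.abs.map_sub ζ ξ])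
        hfξb hord
      rwa [Complex.abs.map_sub (F ζ) (F ξ), Complex.abs.map_sub ζ ξ] at h
  -- the Lipschitz bound on the circle
  have hALnn : 0 ≤ A + L := by linarith
  have hbig : ∀ ξ ∈ sphere (0:ℂ) 1, ∀ ζ ∈ sphere (0:ℂ) 1, ξ ≠ ζ →
      (1/4:ℝ) ≤ Complex.abs (ξ - ζ) →
      Complex.abs (F ξ - F ζ) ≤ (2/(ω.toFun (1/4))) * A * ω.toFun (Complex.abs (ξ - ζ)) := by
    intro ξ hξ ζ hζ hne hge
    have ht2 : Complex.abs (ξ - ζ) ≤ 2 := SMsphere_dist hξ hζ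
    have hω14 : ω.toFun (1/4) ≤ ω.toFun (Complex.abs (ξ - ζ)) :=
      ω.mono ⟨by norm_num, by norm_num⟩ ⟨by linarith, ht2⟩ hge
    have h1 : Complex.abs (F ξ - F ζ) ≤ 2*A := by
      calc Complex.abs (F ξ - F ζ) ≤ Complex.abs (F ξ) + Complex.abs (F ζ) := by
            rw [sub_eq_add_neg]
            refine le_trans (Complex.abs.add_le _ _) ?_
            rw [Complex.abs.map_neg]
        _ ≤ Complex.abs (f ξ) + Complex.abs (f ζ) :=
            add_le_add (hFle ξ (hspcb hξ)) (hFle ζ (hspcb hζ))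
        _ ≤ A + A := add_le_add (hA ξ (hspcb hξ)) (hA ζ (hspcb hζ))
        _ = 2*A := by ring
    calc Complex.abs (F ξ - F ζ) ≤ 2*A := h1
      _ = (2/(ω.toFun (1/4))) * A * ω.toFun (1/4) := by field_simp
      _ ≤ (2/(ω.toFun (1/4))) * A * ω.toFun (Complex.abs (ξ - ζ)) := by
          apply mul_le_mul_of_nonneg_left hω14 (by positivity)
  have hLip : ∀ ξ ∈ sphere (0:ℂ) 1, ∀ ζ ∈ sphere (0:ℂ) 1, ξ ≠ ζ →
      Complex.abs (F ξ - F ζ) ≤ (c₀*(A+L)) * ω.toFun (Complex.abs (ξ - ζ)) := by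
    intro ξ hξ ζ hζ hne
    have ht0 : 0 < Complex.abs (ξ - ζ) := Complex.abs.pos (sub_ne_zero.mpr hne)
    have ht2 : Complex.abs (ξ - ζ) ≤ 2 := SMsphere_dist hξ hζ
    have hωt0 : 0 ≤ ω.toFun (Complex.abs (ξ - ζ)) := SMomega_nonneg ht0.le ht2
    rcases lt_or_ge (Complex.abs (ξ - ζ)) (1/4) with hlt | hge
    · have h := key L hL0 ξ ζ hξ hζ hne hlt (hL ξ hξ ζ hζ hne) (hfdistE ξ hξ) (hfdistE ζ hζ)
      have h2 : L * ω.toFun (Complex.abs (ξ - ζ)) ≤ (A+L) * ω.toFun (Complex.abs (ξ - ζ)) :=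
        mul_le_mul_of_nonneg_right (by linarith) hωt0
      have h3 : c₀ * (L * ω.toFun (Complex.abs (ξ - ζ)))
          ≤ c₀ * ((A+L) * ω.toFun (Complex.abs (ξ - ζ))) :=
        mul_le_mul_of_nonneg_left h2 hc₀pos.le
      calc Complex.abs (F ξ - F ζ) ≤ c₀ * (L * ω.toFun (Complex.abs (ξ - ζ))) := h
        _ ≤ c₀ * ((A+L) * ω.toFun (Complex.abs (ξ - ζ))) := h3
        _ = (c₀*(A+L)) * ω.toFun (Complex.abs (ξ - ζ)) := by ring
    · have h := hbig ξ hξ ζ hζ hne hge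
      have h2 : (2/(ω.toFun (1/4))) * A ≤ c₀*(A+L) :=
        mul_le_mul (by linarith) (by linarith) hA0 hc₀pos.le
      calc Complex.abs (F ξ - F ζ)
          ≤ (2/(ω.toFun (1/4))) * A * ω.toFun (Complex.abs (ξ - ζ)) := h
        _ ≤ (c₀*(A+L)) * ω.toFun (Complex.abs (ξ - ζ)) :=
            mul_le_mul_of_nonneg_right h2 hωt0
  have hFc : ContinuousOn F (closedBall (0:ℂ) 1) := SMF_continuousOn hKcne hμco hfc hfK
  have hFd : DifferentiableOn ℂ F (ball (0:ℂ) 1) :=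
    (SMsingExp_differentiableOn hKcne).mul hfd
  have hFlip : MemLip ω F := ⟨hFc, hFd, c₀*(A+L), hLip⟩
  have hFball : ∀ z ∈ ball (0:ℂ) 1, F z = S z * f z := by
    intro z hz
    rw [hFdef]
    simp only
    rw [hμS z hz]
    rfl
  have hFsup : supNorm F ≤ A := SMsupNorm_le hA0 (fun z hz => le_trans (hFle z hz) (hA z hz))
  have hFsemi : lipSemi ω F ≤ c₀*(A+L) := SMlipSemi_le (by positivity) hLip
  refine ⟨F, hFball, hFlip, ?_, ?_⟩
  · have hFnorm : lipNorm ω F = supNorm F + lipSemi ω F := rfl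
    rw [hFnorm, hlipf]
    have hexp : (1+c₀)*(A+L) = A + L + c₀*(A+L) := by ring
    linarith
  · -- the J-condition
    rintro ⟨⟨hfmem, hfvan⟩, hJf⟩
    refine ⟨⟨hFlip, fun x hx => by rw [hFdef]; simp [hfvan x hx]⟩, ?_⟩
    intro ε hε
    set ε₁ := ε/c₀ with hε₁def
    have hε₁ : 0 < ε₁ := div_pos hε hc₀pos
    obtain ⟨δ₁, hδ₁, hJδ₁⟩ := hJf ε₁ hε₁
    obtain ⟨δ₂, hδ₂mem, hδ₂⟩ : ∃ δ₂, δ₂ ∈ Ioc (0:ℝ) 2 ∧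
        (L+1) * ω.toFun δ₂ < ε * ω.toFun (1/4) / 2 := by
      have hcont := ω.cont 0 ⟨le_refl 0, by norm_num⟩
      have htend : Tendsto ω.toFun (nhdsWithin 0 (Ioc (0:ℝ) 2)) (nhds 0) := by
        have h2 := hcont.tendsto
        rw [ω.zero] at h2
        exact h2.mono_left (nhdsWithin_mono 0 Ioc_subset_Icc_self)
      have hb : 0 < (ε * ω.toFun (1/4)/2) / (L+1) := by positivity
      have hev : ∀ᶠ x in nhdsWithin 0 (Ioc (0:ℝ) 2),
          (L+1) * ω.toFun x < ε * ω.toFun (1/4)/2 := by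
        filter_upwards [htend.eventually (gt_mem_nhds hb)] with x hx
        have h3 : (L+1) * ω.toFun x < (L+1) * ((ε * ω.toFun (1/4)/2) / (L+1)) :=
          mul_lt_mul_of_pos_left hx (by linarith)
        rwa [mul_div_cancel₀ _ (by linarith : L+1 ≠ 0)] at h3
      haveI : (nhdsWithin (0:ℝ) (Ioc (0:ℝ) 2)).NeBot := by
        rw [← mem_closure_iff_nhdsWithin_neBot, closure_Ioc (by norm_num : (0:ℝ) ≠ 2)]
        exact ⟨le_refl 0, by norm_num⟩
      obtain ⟨x, hx1, hx2⟩ := (hev.and self_mem_nhdsWithin).exists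
      exact ⟨x, hx2, hx1⟩
    set δ := min δ₁ δ₂ with hδdef
    have hδpos : 0 < δ := lt_min hδ₁ hδ₂mem.1
    refine ⟨δ, hδpos, ?_⟩
    intro ξ hξ ζ hζ hne
    obtain ⟨hξsp, hξd⟩ := hξ
    obtain ⟨hζsp, hζd⟩ := hζ
    have hmemδ₁ : ∀ x : ℂ, x ∈ ENbhd E δ → x ∈ ENbhd E δ₁ :=
      fun x hx => ⟨hx.1, le_trans hx.2 (min_le_left _ _)⟩
    have hJpoint : ∀ x : ℂ, x ∈ ENbhd E δ →
        Complex.abs (f x) ≤ ε₁ * ω.toFun (infDist x E) := by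
      intro x hx
      obtain ⟨e, heE, hedist⟩ := hEcp.exists_infDist_eq_dist hEne x
      by_cases hxe : x = e
      · have h0 : infDist x E = 0 := by rw [hedist, hxe, dist_self]
        rw [h0, ω.zero, mul_zero, hxe, hfE e heE]
        simp
      · have h := hJδ₁ x (hmemδ₁ x hx) e
          ⟨hEsp heE, by rw [infDist_zero_of_mem heE]; exact hδ₁.le⟩ hxe
        rw [hfE e heE, sub_zero] at h
        rwa [hedist, SMdist_eq]
    have hpairJ : Complex.abs (f ξ - f ζ) ≤ ε₁ * ω.toFun (Complex.abs (ξ - ζ)) :=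
      hJδ₁ ξ (hmemδ₁ ξ ⟨hξsp, hξd⟩) ζ (hmemδ₁ ζ ⟨hζsp, hζd⟩) hne
    rcases lt_or_ge (Complex.abs (ξ - ζ)) (1/4) with hlt | hge
    · have h := key ε₁ hε₁.le ξ ζ hξsp hζsp hne hlt hpairJ
        (hJpoint ξ ⟨hξsp, hξd⟩) (hJpoint ζ ⟨hζsp, hζd⟩)
      calc Complex.abs (F ξ - F ζ) ≤ c₀ * (ε₁ * ω.toFun (Complex.abs (ξ - ζ))) := h
        _ = ε * ω.toFun (Complex.abs (ξ - ζ)) := by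
            rw [hε₁def, ← mul_assoc, mul_comm c₀ (ε/c₀), div_mul_cancel₀ _ hc₀pos.ne']
    · have ht2 : Complex.abs (ξ - ζ) ≤ 2 := SMsphere_dist hξsp hζsp
      have hω14t : ω.toFun (1/4) ≤ ω.toFun (Complex.abs (ξ - ζ)) :=
        ω.mono ⟨by norm_num, by norm_num⟩ ⟨by linarith, ht2⟩ hge
      have hδδ₂ : δ ≤ δ₂ := min_le_right _ _
      have hωδ₂0 : 0 ≤ ω.toFun δ₂ := SMomega_nonneg hδ₂mem.1.le hδ₂mem.2
      have hbd : ∀ x : ℂ, x ∈ sphere (0:ℂ) 1 → infDist x E ≤ δ →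
          Complex.abs (f x) ≤ L * ω.toFun δ₂ := by
        intro x hxsp hxd
        calc Complex.abs (f x) ≤ L * ω.toFun (infDist x E) := hfdistE x hxsp
          _ ≤ L * ω.toFun δ₂ := by
              apply mul_le_mul_of_nonneg_left _ hL0
              exact ω.mono ⟨infDist_nonneg, by linarith [hxd.trans hδδ₂, hδ₂mem.2]⟩
                ⟨hδ₂mem.1.le, hδ₂mem.2⟩ (hxd.trans hδδ₂)
      have hchain : Complex.abs (F ξ - F ζ) ≤ 2 * (L * ω.toFun δ₂) := by
        calc Complex.abs (F ξ - F ζ) ≤ Complex.abs (F ξ) + Complex.abs (F ζ) := by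
              rw [sub_eq_add_neg]
              refine le_trans (Complex.abs.add_le _ _) ?_
              rw [Complex.abs.map_neg]
          _ ≤ Complex.abs (f ξ) + Complex.abs (f ζ) :=
              add_le_add (hFle ξ (hspcb hξsp)) (hFle ζ (hspcb hζsp))
          _ ≤ L * ω.toFun δ₂ + L * ω.toFun δ₂ :=
              add_le_add (hbd ξ hξsp hξd) (hbd ζ hζsp hζd)
          _ = 2 * (L * ω.toFun δ₂) := by ring
      have hfin : 2 * (L * ω.toFun δ₂) ≤ ε * ω.toFun (1/4) := by
        have h5 : L * ω.toFun δ₂ ≤ (L+1) * ω.toFun δ₂ :=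
          mul_le_mul_of_nonneg_right (by linarith) hωδ₂0
        linarith
      calc Complex.abs (F ξ - F ζ) ≤ 2 * (L * ω.toFun δ₂) := hchain
        _ ≤ ε * ω.toFun (1/4) := hfin
        _ ≤ ε * ω.toFun (Complex.abs (ξ - ζ)) :=
            mul_le_mul_of_nonneg_left hω14t hε.le
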